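/- arXiv:2512.17381 — 9 statements merged into one kernel-verified Lean document; each statement's English description precedes it below -/
import Mathlib

section
/- Let C_m and C_M be real numbers with 0 < C_m ≤ C_M, and set θ = (1 + 1/C_M)^{C_m} − 1 (real exponentiation). Let (S_n)_{n≥0} be a sequence of real numbers satisfying S_0 ≥ 0 and S_n ≥ (1 + 1/C_M)·S_{n-1} + 1/(θ·C_M) for every n ≥ 1. Then S_{⌈C_m⌉} ≥ 1, where ⌈C_m⌉ is the ceiling of C_m. -/
/-- Core of Lemma 2: with `θ = (1 + 1/C_M)^{C_m} - 1` (real exponentiation),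
any sequence with `S 0 ≥ 0` and `S n ≥ (1 + 1/C_M) * S (n-1) + 1/(θ*C_M)`
reaches `1` after `⌈C_m⌉` steps. -/
theorem stmt_1 (Cm CM : ℝ) (hCm : 0 < Cm) (hle : Cm ≤ CM)
    (θ : ℝ) (hθ : θ = (1 + 1 / CM) ^ Cm - 1)
    (S : ℕ → ℝ) (hS0 : 0 ≤ S 0)
    (hrec : ∀ n : ℕ, 1 ≤ n → S n ≥ (1 + 1 / CM) * S (n - 1) + 1 / (θ * CM)) :
    S ⌈Cm⌉₊ ≥ 1 := by
  have hCM : 0 < CM := hCm.trans_le hle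
  set r : ℝ := 1 + 1 / CM with hrdef
  have hr : (1 : ℝ) < r := by
    have h : 0 < 1 / CM := by positivity
    rw [hrdef]; linarith
  have hr0 : (0 : ℝ) < r := by linarith
  have hθpos : 0 < θ := by
    rw [hθ]
    have : (1 : ℝ) < r ^ Cm := by
      rw [Real.one_lt_rpow_iff_of_pos hr0]
      exact Or.inl ⟨hr, hCm⟩
    linarith
  have key : ∀ n : ℕ, (r ^ n - 1) / θ ≤ S n := by
    intro n
    induction n with
    | zero => simpa using hS0
    | succ n ih =>
      have h1 := hrec (n + 1) (by omega)
      simp only [Nat.add_sub_cancel] at h1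
      have h2 : r * ((r ^ n - 1) / θ) ≤ r * S n :=
        mul_le_mul_of_nonneg_left ih (le_of_lt hr0)
      have h3 : (r ^ (n + 1) - 1) / θ = r * ((r ^ n - 1) / θ) + 1 / (θ * CM) := by
        field_simp [hrdef]
        have hrCM : r * CM = CM + 1 := by
          rw [hrdef, add_mul, one_mul, one_div, inv_mul_cancel₀ hCM.ne']
        linear_combination hrCM
      rw [h3]
      linarith
  have hceil : Cm ≤ (⌈Cm⌉₊ : ℝ) := Nat.le_ceil Cm
  have hpow : r ^ Cm ≤ r ^ (⌈Cm⌉₊ : ℕ) := by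
    rw [← Real.rpow_natCast r ⌈Cm⌉₊]
    exact Real.rpow_le_rpow_of_exponent_le (le_of_lt hr) hceil
  have : (1 : ℝ) ≤ (r ^ (⌈Cm⌉₊ : ℕ) - 1) / θ := by
    rw [le_div_iff₀ hθpos, one_mul, hθ]
    linarith
  linarith [key ⌈Cm⌉₊]
end

section
/- Let R > 0 be a real number and define p : ℝ → ℝ by p(t) = e^{t/R}/(R·(e^{1/R} − 1)). Then ∫_0^1 p(t) dt = 1, and for every real T with 0 < T ≤ 1, ∫_0^T (R + t)·p(t) dt + T·∫_T^1 p(t) dt = (e^{1/R}/(e^{1/R} − 1))·T. -/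
lemma exp_int (R : ℝ) (hR : 0 < R) (a b : ℝ) :
    ∫ t in a..b, Real.exp (t / R) = R * Real.exp (b / R) - R * Real.exp (a / R) := by
  have h : ∀ t : ℝ, HasDerivAt (fun t => R * Real.exp (t / R)) (Real.exp (t / R)) t := by
    intro t
    have := (((hasDerivAt_id t).div_const R).exp).const_mul R
    refine this.congr_deriv ?_
    simp only [id]
    field_simp
  rw [intervalIntegral.integral_eq_sub_of_hasDerivAt (fun t _ => h t)
    ((Real.continuous_exp.comp (continuous_id.div_const R)).intervalIntegrable a b)]

lemma rt_int (R : ℝ) (hR : 0 < R) (T : ℝ) :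
    ∫ t in (0:ℝ)..T, (R + t) * Real.exp (t / R) = R * T * Real.exp (T / R) := by
  have h : ∀ t : ℝ, HasDerivAt (fun t => R * t * Real.exp (t / R))
      ((R + t) * Real.exp (t / R)) t := by
    intro t
    have h1 : HasDerivAt (fun t : ℝ => R * t) R t := (hasDerivAt_id t).const_mul R |>.congr_deriv (by ring)
    have h2 : HasDerivAt (fun t : ℝ => Real.exp (t / R)) (Real.exp (t / R) * (1 / R)) t :=
      ((hasDerivAt_id t).div_const R).exp
    have := h1.mul h2
    refine this.congr_deriv ?_
    field_simp
  have hc : Continuous fun t : ℝ => (R + t) * Real.exp (t / R) := by continuity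
  rw [intervalIntegral.integral_eq_sub_of_hasDerivAt (fun t _ => h t)
    (hc.intervalIntegrable 0 T)]
  simp

/-- Explicit computation in the proof of Lemma 4: for the density
`p(t) = e^{t/R}/(R·(e^{1/R} - 1))`, we have `∫_0^1 p = 1` and, for every
`T ∈ (0,1]`, `∫_0^T (R+t)·p(t) dt + T·∫_T^1 p(t) dt = (e^{1/R}/(e^{1/R}-1))·T`. -/
theorem stmt_3 (R : ℝ) (hR : 0 < R)
    (p : ℝ → ℝ) (hp : ∀ t, p t = Real.exp (t / R) / (R * (Real.exp (1 / R) - 1))) :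
    (∫ t in (0:ℝ)..1, p t) = 1 ∧
    ∀ T : ℝ, 0 < T → T ≤ 1 →
      (∫ t in (0:ℝ)..T, (R + t) * p t) + T * (∫ t in T..(1:ℝ), p t)
        = (Real.exp (1 / R) / (Real.exp (1 / R) - 1)) * T := by
  have hgt : 1 < Real.exp (1 / R) := by
    rw [← Real.exp_zero]
    exact Real.exp_lt_exp.mpr (by positivity)
  have hne : Real.exp (1 / R) - 1 ≠ 0 := by linarith
  have hden : R * (Real.exp (1 / R) - 1) ≠ 0 := by positivity
  have hps : ∀ a b : ℝ, (∫ t in a..b, p t)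
      = (R * Real.exp (b / R) - R * Real.exp (a / R)) / (R * (Real.exp (1 / R) - 1)) := by
    intro a b
    simp only [hp]
    rw [intervalIntegral.integral_div, exp_int R hR]
  constructor
  · rw [hps]
    field_simp
    rw [zero_div, Real.exp_zero]
  · intro T hT0 hT1
    have h1 : (∫ t in (0:ℝ)..T, (R + t) * p t)
        = (R * T * Real.exp (T / R)) / (R * (Real.exp (1 / R) - 1)) := by
      simp only [hp, mul_div_assoc']
      rw [intervalIntegral.integral_div, rt_int R hR]
    rw [h1, hps]
    field_simp
    ring
end

section
/- Let R ≥ 1 be a real number, let p : ℝ → ℝ be a nonnegative function that is integrable on [0,1] with ∫_0^1 p(t) dt = 1, and let c be a real number such that for every T with 0 < T ≤ 1, ∫_0^T (R + t)·p(t) dt + T·∫_T^1 p(t) dt ≤ c·T. Then c ≥ e^{1/R}/(e^{1/R} − 1). -/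
open MeasureTheory

open intervalIntegral Set

/-- Continuous-time LP underlying Lemma 4 (converse): any density `p` on `[0,1]`
satisfying the competitive-ratio constraints for all horizons `T ∈ (0,1]`
forces `c ≥ e^{1/R}/(e^{1/R} - 1)`. -/
theorem stmt_4 (R : ℝ) (hR : 1 ≤ R)
    (p : ℝ → ℝ) (hp : ∀ t, 0 ≤ p t)
    (hint : IntegrableOn p (Set.Icc 0 1))
    (hnorm : (∫ t in (0:ℝ)..1, p t) = 1)
    (c : ℝ)
    (hc : ∀ T : ℝ, 0 < T → T ≤ 1 →
      (∫ t in (0:ℝ)..T, (R + t) * p t) + T * (∫ t in T..(1:ℝ), p t) ≤ c * T) :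
    c ≥ Real.exp (1 / R) / (Real.exp (1 / R) - 1) := by
  have hR0 : (0:ℝ) < R := lt_of_lt_of_le one_pos hR
  have hIp : ∀ x y : ℝ, x ∈ Set.Icc (0:ℝ) 1 → y ∈ Set.Icc (0:ℝ) 1 →
      IntervalIntegrable p volume x y := by
    intro x y hx hy
    apply IntegrableOn.intervalIntegrable
    apply hint.mono_set
    rw [Set.uIcc_eq_union]
    exact Set.union_subset (Set.Icc_subset_Icc hx.1 hy.2) (Set.Icc_subset_Icc hy.1 hx.2)
  have hImul : ∀ (f : ℝ → ℝ), Continuous f → ∀ x y : ℝ, x ∈ Set.Icc (0:ℝ) 1 → y ∈ Set.Icc (0:ℝ) 1 →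
      IntervalIntegrable (fun t => f t * p t) volume x y := by
    intro f hf x y hx hy
    exact (hIp x y hx hy).continuousOn_mul hf.continuousOn
  set F : ℝ → ℝ := fun T => ∫ t in (0:ℝ)..T, p t with hF
  set ψ : ℝ → ℝ := fun T => ∫ t in (0:ℝ)..T, t * p t with hψ
  set G : ℝ → ℝ := fun T => T * F T - ψ T with hG
  have h01 : (0:ℝ) ∈ Set.Icc (0:ℝ) 1 := by norm_num
  have h11 : (1:ℝ) ∈ Set.Icc (0:ℝ) 1 := by norm_num
  have hFcont : ContinuousOn F (Set.Icc 0 1) := by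
    have := intervalIntegral.continuousOn_primitive_interval
      (f := p) (a := (0:ℝ)) (b := 1) (μ := volume) (by rwa [Set.uIcc_of_le zero_le_one])
    rwa [Set.uIcc_of_le zero_le_one] at this
  have hψcont : ContinuousOn ψ (Set.Icc 0 1) := by
    have h1 : IntegrableOn (fun t : ℝ => t * p t) (Set.uIcc (0:ℝ) 1) volume := by
      rw [Set.uIcc_of_le zero_le_one,
        ← intervalIntegrable_iff_integrableOn_Icc_of_le zero_le_one]
      exact hImul (fun t => t) continuous_id' 0 1 h01 h11
    have := intervalIntegral.continuousOn_primitive_interval h1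
    rwa [Set.uIcc_of_le zero_le_one] at this
  have hGcont : ContinuousOn G (Set.Icc 0 1) :=
    ((continuousOn_id.mul hFcont)).sub hψcont
  have hFdiff : ∀ x y : ℝ, x ∈ Set.Icc (0:ℝ) 1 → y ∈ Set.Icc (0:ℝ) 1 →
      F y - F x = ∫ t in x..y, p t := by
    intro x y hx hy
    have h := intervalIntegral.integral_add_adjacent_intervals
      (hIp 0 x h01 hx) (hIp x y hx hy)
    simp only [hF]
    linarith [h]
  have hGdiff : ∀ x y : ℝ, x ∈ Set.Icc (0:ℝ) 1 → y ∈ Set.Icc (0:ℝ) 1 →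
      G y - G x - (y - x) * F x = ∫ t in x..y, (y - t) * p t := by
    intro x y hx hy
    have e1 : (∫ t in (0:ℝ)..y, (y - t) * p t)
        = (∫ t in (0:ℝ)..x, (y - t) * p t) + ∫ t in x..y, (y - t) * p t :=
      (intervalIntegral.integral_add_adjacent_intervals
        (hImul (fun t => y - t) (continuous_const.sub continuous_id) 0 x h01 hx)
        (hImul (fun t => y - t) (continuous_const.sub continuous_id) x y hx hy)).symm
    have e2 : ∀ z : ℝ, z ∈ Set.Icc (0:ℝ) 1 →
        (∫ t in (0:ℝ)..z, (y - t) * p t) = y * F z - ψ z := by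
      intro z hz
      have eq1 : (∫ t in (0:ℝ)..z, (y - t) * p t)
          = ∫ t in (0:ℝ)..z, (y * p t - t * p t) :=
        intervalIntegral.integral_congr (fun t _ => by ring)
      rw [eq1, intervalIntegral.integral_sub
        ((hIp 0 z h01 hz).const_mul y) (hImul (fun t => t) continuous_id' 0 z h01 hz),
        intervalIntegral.integral_const_mul]
    have e3 := e2 y hy
    have e4 := e2 x hx
    have e5 : (∫ t in x..y, (y - t) * p t) = (y * F y - ψ y) - (y * F x - ψ x) := by
      rw [← e3, ← e4]; linarith [e1]
    rw [e5]
    simp only [hG]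
    ring
  have hGderiv : ∀ T ∈ Set.Ioo (0:ℝ) 1, HasDerivAt G (F T) T := by
    intro T hT
    have hTmem : T ∈ Set.Icc (0:ℝ) 1 := Set.mem_Icc_of_Ioo hT
    rw [hasDerivAt_iff_isLittleO, Asymptotics.isLittleO_iff]
    intro ε hε
    have hnbd : Set.Icc (0:ℝ) 1 ∈ nhds T := Icc_mem_nhds hT.1 hT.2
    have hFct : ContinuousAt F T := hFcont.continuousAt hnbd
    have hev : ∀ᶠ y in nhds T, |F y - F T| ≤ ε := by
      have h := hFct.tendsto
      rw [Metric.tendsto_nhds] at h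
      filter_upwards [h ε hε] with y hy
      rw [Real.dist_eq] at hy
      exact le_of_lt hy
    filter_upwards [hnbd, hev] with y hy hyF
    have hid := hGdiff T y hTmem hy
    have hFd := hFdiff T y hTmem hy
    have hbound : ‖∫ t in T..y, (y - t) * p t‖ ≤ ε * ‖y - T‖ := by
      rcases le_total T y with h | h
      · have h1 : (∫ t in T..y, (y - t) * p t) ≤ ∫ t in T..y, (y - T) * p t := by
          apply intervalIntegral.integral_mono_on h
            (hImul (fun t => y - t) (continuous_const.sub continuous_id) T y hTmem hy)
            ((hIp T y hTmem hy).const_mul (y - T))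
          intro t ht
          show (y - t) * p t ≤ (y - T) * p t
          exact mul_le_mul_of_nonneg_right (by linarith [ht.1]) (hp t)
        have h2 : (0:ℝ) ≤ ∫ t in T..y, (y - t) * p t := by
          apply intervalIntegral.integral_nonneg h
          intro t ht
          exact mul_nonneg (by linarith [ht.2]) (hp t)
        have h3 : (∫ t in T..y, (y - T) * p t) = (y - T) * (F y - F T) := by
          rw [intervalIntegral.integral_const_mul, ← hFd]
        have h4 : F y - F T ≤ ε := le_of_abs_le hyF
        have h5 : (0:ℝ) ≤ F y - F T := by
          rw [hFd]
          exact intervalIntegral.integral_nonneg h (fun t _ => hp t)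
        rw [Real.norm_eq_abs, Real.norm_eq_abs, abs_of_nonneg h2,
          abs_of_nonneg (by linarith : (0:ℝ) ≤ y - T)]
        nlinarith [h1, h3]
      · have hswap : (∫ t in T..y, (y - t) * p t) = - ∫ t in y..T, (y - t) * p t :=
          intervalIntegral.integral_symm y T
        have h1 : (∫ t in y..T, (y - T) * p t) ≤ ∫ t in y..T, (y - t) * p t := by
          apply intervalIntegral.integral_mono_on h
            ((hIp y T hy hTmem).const_mul (y - T))
            (hImul (fun t => y - t) (continuous_const.sub continuous_id) y T hy hTmem)
          intro t ht
          show (y - T) * p t ≤ (y - t) * p t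
          exact mul_le_mul_of_nonneg_right (by linarith [ht.2]) (hp t)
        have h2 : (∫ t in y..T, (y - t) * p t) ≤ 0 := by
          have : (∫ t in y..T, (y - t) * p t) ≤ ∫ t in y..T, (0:ℝ) := by
            apply intervalIntegral.integral_mono_on h
              (hImul (fun t => y - t) (continuous_const.sub continuous_id) y T hy hTmem)
              intervalIntegrable_const
            intro t ht
            show (y - t) * p t ≤ 0
            exact mul_nonpos_of_nonpos_of_nonneg (by linarith [ht.1]) (hp t)
          simpa using this
        have h3 : (∫ t in y..T, (y - T) * p t) = (y - T) * (F T - F y) := by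
          rw [intervalIntegral.integral_const_mul, hFdiff y T hy hTmem]
        have h4 : F T - F y ≤ ε := by
          have h6 := abs_le.1 hyF; linarith [h6.1]
        have h5 : (0:ℝ) ≤ F T - F y := by
          rw [hFdiff y T hy hTmem]
          exact intervalIntegral.integral_nonneg h (fun t _ => hp t)
        rw [hswap, Real.norm_eq_abs, Real.norm_eq_abs, abs_neg,
          abs_of_nonpos h2, abs_of_nonpos (by linarith : y - T ≤ 0)]
        nlinarith [h1, h3]
    rw [smul_eq_mul]
    calc ‖G y - G T - (y - T) * F T‖ = ‖∫ t in T..y, (y - t) * p t‖ := by rw [hid]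
      _ ≤ ε * ‖y - T‖ := hbound
  -- constraint in terms of F and G
  have hcon : ∀ T : ℝ, 0 < T → T ≤ 1 → R * F T ≤ (c - 1) * T + G T := by
    intro T hT0 hT1
    have hTmem : T ∈ Set.Icc (0:ℝ) 1 := ⟨le_of_lt hT0, hT1⟩
    have h1 : (∫ t in (0:ℝ)..T, (R + t) * p t) = R * F T + ψ T := by
      have eq1 : (∫ t in (0:ℝ)..T, (R + t) * p t)
          = ∫ t in (0:ℝ)..T, (R * p t + t * p t) :=
        intervalIntegral.integral_congr (fun t _ => by ring)
      rw [eq1, intervalIntegral.integral_add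
        ((hIp 0 T h01 hTmem).const_mul R) (hImul (fun t => t) continuous_id' 0 T h01 hTmem),
        intervalIntegral.integral_const_mul]
    have h2 : (∫ t in T..(1:ℝ), p t) = 1 - F T := by
      have h := hFdiff T 1 hTmem h11
      have hF1 : F 1 = 1 := hnorm
      linarith [h]
    have h3 := hc T hT0 hT1
    rw [h1, h2] at h3
    simp only [hG]
    nlinarith [h3]
  -- Lyapunov function
  set φ : ℝ → ℝ := fun T => Real.exp (-T / R) * (G T + (c - 1) * (T + R)) with hφ
  have hφderiv : ∀ T ∈ Set.Ioo (0:ℝ) 1, HasDerivAt φ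
      (Real.exp (-T / R) * (-1 / R) * (G T + (c - 1) * (T + R))
        + Real.exp (-T / R) * (F T + (c - 1))) T := by
    intro T hT
    have h1 : HasDerivAt (fun T : ℝ => -T / R) (-1 / R) T := by
      simpa using ((hasDerivAt_id T).neg).div_const R
    have h2 : HasDerivAt (fun T : ℝ => Real.exp (-T / R))
        (Real.exp (-T / R) * (-1 / R)) T := h1.exp
    have h3 : HasDerivAt (fun T : ℝ => G T + (c - 1) * (T + R)) (F T + (c - 1)) T := by
      have h4 := (hGderiv T hT).add ((((hasDerivAt_id T).add_const R)).const_mul (c - 1))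
      have h5 : F T + (c - 1) = F T + (c - 1) * 1 := by ring
      rw [h5]
      exact h4
    exact h2.mul h3
  have hφanti : AntitoneOn φ (Set.Icc 0 1) := by
    apply antitoneOn_of_deriv_nonpos (convex_Icc 0 1)
    · exact (((Real.continuous_exp.comp ((continuous_neg).div_const R)).continuousOn).mul
        (hGcont.add (continuousOn_const.mul (continuousOn_id.add continuousOn_const))))
    · intro x hx
      rw [interior_Icc] at hx
      exact ((hφderiv x hx).differentiableAt).differentiableWithinAt
    · intro x hx
      rw [interior_Icc] at hx
      rw [(hφderiv x hx).deriv]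
      have hcx := hcon x hx.1 (le_of_lt hx.2)
      have he : (0:ℝ) < Real.exp (-x / R) := Real.exp_pos _
      have key : F x + (c - 1) ≤ (G x + (c - 1) * (x + R)) / R := by
        rw [le_div_iff₀ hR0]
        nlinarith
      calc Real.exp (-x / R) * (-1 / R) * (G x + (c - 1) * (x + R))
            + Real.exp (-x / R) * (F x + (c - 1))
          = Real.exp (-x / R) * ((F x + (c - 1)) - (G x + (c - 1) * (x + R)) / R) := by
            field_simp; ring
        _ ≤ Real.exp (-x / R) * 0 := by
            apply mul_le_mul_of_nonneg_left _ (le_of_lt he)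
            linarith
        _ = 0 := mul_zero _
  have hφ10 : φ 1 ≤ φ 0 := hφanti h01 h11 zero_le_one
  have hG0 : G 0 = 0 := by
    simp only [hG, hF, hψ, intervalIntegral.integral_same]; ring
  have hF1 : F 1 = 1 := hnorm
  set E : ℝ := Real.exp (1 / R) with hE
  have hE1 : (1:ℝ) < E := Real.one_lt_exp_iff.2 (by positivity)
  have hexp1 : Real.exp (-1 / R) = 1 / E := by
    rw [neg_div, Real.exp_neg, hE]; exact (one_div _).symm
  have hG1 : G 1 ≤ (c - 1) * (R * E - 1 - R) := by
    have h0 : φ 0 = (c - 1) * R := by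
      simp only [hφ, hG0]
      norm_num
    have h1 : φ 1 = (G 1 + (c - 1) * (1 + R)) / E := by
      simp only [hφ, hexp1]
      ring
    rw [h0, h1] at hφ10
    rw [div_le_iff₀ (by linarith : (0:ℝ) < E)] at hφ10
    nlinarith
  have hA : R + 1 - G 1 ≤ c := by
    have h := hcon 1 one_pos le_rfl
    rw [hF1] at h
    linarith
  rw [ge_iff_le, div_le_iff₀ (by linarith : (0:ℝ) < E - 1)]
  have key : R * E ≤ R * (c * (E - 1)) := by nlinarith
  exact le_of_mul_le_mul_left key hR0
end

section
/- Let C > 0 and θ_s ≥ θ_f > 0 be real numbers, let N ∈ ℕ, and let b : {0,…,N−1} → {slow, fast} be any sequence of step types containing exactly N_s slow steps and N_f fast steps (so N_s + N_f = N). Let (S_k)_{0≤k≤N} be real numbers with S_0 ≥ 0 and, for each k, S_{k+1} ≥ (1 + 1/C)·S_k + 1/(θ_s·C) if step k is slow, and S_{k+1} ≥ (1 + 1/C)·S_k + 1/(θ_f·C) if step k is fast. Then S_N ≥ ((1 + 1/C)^{N_s} − 1)/θ_s · (1 + 1/C)^{N_f} + ((1 + 1/C)^{N_f} − 1)/θ_f.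 -/
/-- Lemma 5: lower bound on the cumulative clearing probability after any
interleaving of `Ns` slow steps and `Nf` fast steps.  Here `b k = true`
means step `k` is a slow step, and `b k = false` means it is a fast step. -/
theorem stmt_5 (C θs θf : ℝ) (hC : 0 < C) (hθf : 0 < θf) (hθ : θf ≤ θs)
    (N Ns Nf : ℕ) (b : ℕ → Bool)
    (hNs : Ns = ((Finset.range N).filter (fun k => b k = true)).card)
    (hNf : Nf = ((Finset.range N).filter (fun k => b k = false)).card)
    (S : ℕ → ℝ) (hS0 : 0 ≤ S 0)
    (hstep : ∀ k < N,
      S (k + 1) ≥ (1 + 1 / C) * S k + 1 / ((if b k then θs else θf) * C)) :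
    S N ≥ ((1 + 1 / C) ^ Ns - 1) / θs * (1 + 1 / C) ^ Nf
      + ((1 + 1 / C) ^ Nf - 1) / θf := by
  have hθs : 0 < θs := lt_of_lt_of_le hθf hθ
  set q : ℝ := 1 + 1 / C with hqdef
  have hq1 : 1 < q := by
    have : 0 < 1 / C := by positivity
    simp [hqdef]; linarith
  have hq0 : (0:ℝ) < q := lt_trans one_pos hq1
  have hcpow : ∀ n : ℕ, (1:ℝ) ≤ q ^ n := fun n => one_le_pow₀ hq1.le
  have hus : 0 < θs⁻¹ := inv_pos.mpr hθs
  have huf : 0 < θf⁻¹ := inv_pos.mpr hθf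
  have hinv : θs⁻¹ ≤ θf⁻¹ := by
    apply inv_anti₀ hθf hθ
  have hCinv : C⁻¹ = q - 1 := by rw [hqdef]; ring
  set f : ℕ → ℕ → ℝ := fun a c => (q ^ a - 1) * θs⁻¹ * q ^ c + (q ^ c - 1) * θf⁻¹
    with hf
  have slow : ∀ a c : ℕ, f (a + 1) c ≤ q * f a c + (q - 1) * θs⁻¹ := by
    intro a c
    have h1 := hcpow c
    have key : 0 ≤ (q - 1) * (q ^ c - 1) * (θf⁻¹ - θs⁻¹) :=
      mul_nonneg (mul_nonneg (by linarith) (by linarith)) (by linarith)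
    simp only [hf, pow_succ]
    nlinarith [key]
  have fast : ∀ a c : ℕ, f a (c + 1) = q * f a c + (q - 1) * θf⁻¹ := by
    intro a c
    simp only [hf, pow_succ]
    ring
  have key : ∀ k ≤ N,
      f (((Finset.range k).filter (fun i => b i = true)).card)
        (((Finset.range k).filter (fun i => b i = false)).card) ≤ S k := by
    intro k
    induction k with
    | zero => intro _; simpa [hf] using hS0
    | succ k ih =>
      intro hk
      have hkN : k < N := Nat.lt_of_succ_le hk
      have ihk := ih hkN.le
      have hstepk := hstep k hkN
      have hmul : q * f (((Finset.range k).filter (fun i => b i = true)).card)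
          (((Finset.range k).filter (fun i => b i = false)).card) ≤ q * S k :=
        mul_le_mul_of_nonneg_left ihk hq0.le
      cases hb : b k with
      | true =>
        have h1 : (Finset.range (k+1)).filter (fun i => b i = true)
            = insert k ((Finset.range k).filter (fun i => b i = true)) := by
          rw [Finset.range_add_one, Finset.filter_insert]; simp [hb]
        have h2 : (Finset.range (k+1)).filter (fun i => b i = false)
            = (Finset.range k).filter (fun i => b i = false) := by
          rw [Finset.range_add_one, Finset.filter_insert]; simp [hb]
        have hcard : ((Finset.range (k+1)).filter (fun i => b i = true)).card
            = ((Finset.range k).filter (fun i => b i = true)).card + 1 := by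
          rw [h1, Finset.card_insert_of_notMem (by simp)]
        rw [hcard, h2]
        have hc : 1 / (θs * C) = (q - 1) * θs⁻¹ := by
          rw [one_div, mul_inv, hCinv]; ring
        rw [hb, if_pos rfl] at hstepk
        rw [hc] at hstepk
        calc f (((Finset.range k).filter (fun i => b i = true)).card + 1)
              (((Finset.range k).filter (fun i => b i = false)).card)
            ≤ q * f (((Finset.range k).filter (fun i => b i = true)).card)
              (((Finset.range k).filter (fun i => b i = false)).card)
              + (q - 1) * θs⁻¹ := slow _ _
          _ ≤ q * S k + (q - 1) * θs⁻¹ := add_le_add_left hmul _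
          _ ≤ S (k + 1) := hstepk
      | false =>
        have h1 : (Finset.range (k+1)).filter (fun i => b i = true)
            = (Finset.range k).filter (fun i => b i = true) := by
          rw [Finset.range_add_one, Finset.filter_insert]; simp [hb]
        have h2 : (Finset.range (k+1)).filter (fun i => b i = false)
            = insert k ((Finset.range k).filter (fun i => b i = false)) := by
          rw [Finset.range_add_one, Finset.filter_insert]; simp [hb]
        have hcard : ((Finset.range (k+1)).filter (fun i => b i = false)).card
            = ((Finset.range k).filter (fun i => b i = false)).card + 1 := by
          rw [h2, Finset.card_insert_of_notMem (by simp)]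
        rw [hcard, h1]
        have hc : 1 / (θf * C) = (q - 1) * θf⁻¹ := by
          rw [one_div, mul_inv, hCinv]; ring
        rw [hb, if_neg (by simp)] at hstepk
        rw [hc] at hstepk
        rw [fast]
        exact le_trans (add_le_add_left hmul _) hstepk
  have hfinal := key N le_rfl
  rw [← hNs, ← hNf] at hfinal
  have : ((q:ℝ) ^ Ns - 1) / θs * q ^ Nf + (q ^ Nf - 1) / θf = f Ns Nf := by
    simp [hf, div_eq_mul_inv]
  rw [this]
  exact hfinal
end

section
/- Let C_m and C_M be real numbers with 0 < C_m ≤ C_M, let λ be real with 0 < λ ≤ 1, and set θ_s = (1 + 1/C_M)^{C_m/λ} − 1 and θ_f = (1 + 1/C_M)^{C_m·λ} − 1 (real exponentiation). Then for all real numbers N_s ≥ 0 and N_f ≥ 0 with N_s·λ + N_f ≥ C_m, it holds that ((1 + 1/C_M)^{N_s} − 1)/θ_s · (1 + 1/C_M)^{N_f} + ((1 + 1/C_M)^{N_f} − 1)/θ_f ≥ 1. -/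
open Real

/-- cubic lower bound for exp on nonneg reals -/
lemma aux_exp_cubic_le (x : ℝ) (hx : 0 ≤ x) : 1 + x + x^2/2 + x^3/6 ≤ Real.exp x := by
  have h := Real.sum_le_exp_of_nonneg hx 4
  simp [Finset.sum_range_succ, Nat.factorial] at h
  nlinarith [h]

/-- quadratic upper bound for exp(-s), s ≥ 0 -/
lemma aux_exp_neg_quad (s : ℝ) (hs : 0 ≤ s) : Real.exp (-s) ≤ 1 - s + s^2/2 := by
  have hQ : 1 + s + s^2/2 + s^3/6 ≤ Real.exp s := aux_exp_cubic_le s hs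
  have hQ0 : (0:ℝ) < 1 + s + s^2/2 + s^3/6 := by nlinarith
  have hP0 : (0:ℝ) < 1 - s + s^2/2 := by nlinarith [sq_nonneg (s-1)]
  have key : (1 - s + s^2/2) * (1 + s + s^2/2 + s^3/6) ≥ 1 := by nlinarith [pow_nonneg hs 3, pow_nonneg hs 4, pow_nonneg hs 5]
  have hexp : (1 - s + s^2/2) * Real.exp s ≥ 1 := by
    calc (1 - s + s^2/2) * Real.exp s ≥ (1 - s + s^2/2) * (1 + s + s^2/2 + s^3/6) := by
          exact mul_le_mul_of_nonneg_left hQ hP0.le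
      _ ≥ 1 := key
  rw [Real.exp_neg]
  rw [inv_le_iff_one_le_mul₀ (Real.exp_pos s)]
  linarith [hexp]

/-- degree-3 alternating lower bound with explicit error, for exp(-x), 0 ≤ x ≤ 1 -/
lemma aux_exp_neg_cubic_err (x : ℝ) (h0 : 0 ≤ x) (h1 : x ≤ 1) :
    1 - x + x^2/2 - x^3/6 - 5*x^4/96 ≤ Real.exp (-x) := by
  have habs : |(-x)| ≤ 1 := by rw [abs_neg, abs_of_nonneg h0]; exact h1
  have h := Real.exp_bound habs (n := 4) (by norm_num)
  have h' := (abs_le.1 h).1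
  simp [Finset.sum_range_succ, Nat.factorial, abs_neg, abs_of_nonneg h0] at h'
  nlinarith [h']

set_option maxHeartbeats 1000000 in
/-- Key single-variable inequality: `p (1 - e^{-1/p}) ≤ 1 - e^{-p}` for `p ≥ 1`. -/
lemma aux_K1 (p : ℝ) (hp : 1 ≤ p) : p * (1 - Real.exp (-(1/p))) ≤ 1 - Real.exp (-p) := by
  have hp0 : (0:ℝ) < p := lt_of_lt_of_le one_pos hp
  rcases le_or_gt p 2 with hp2 | hp2
  · -- branch b : 1 ≤ p ≤ 2, set s = p - 1
    set s : ℝ := p - 1 with hs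
    have hs0 : 0 ≤ s := by linarith
    have hs1 : s ≤ 1 := by linarith
    -- e^{-1/p} = e^{-1} * e^{s/p},  e^{-p} = e^{-1} * e^{-s}
    have e1 : Real.exp (-(1/p)) = Real.exp (-1) * Real.exp (s/p) := by
      rw [← Real.exp_add]; congr 1; field_simp; ring
    have e2 : Real.exp (-p) = Real.exp (-1) * Real.exp (-s) := by
      rw [← Real.exp_add]; congr 1; ring
    have hc : (0.367879 : ℝ) ≤ Real.exp (-1) := by
      rw [Real.exp_neg]
      rw [le_inv_comm₀ (by norm_num) (Real.exp_pos 1)]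
      exact le_of_lt (lt_of_lt_of_le Real.exp_one_lt_d9 (by norm_num))
    have hsp0 : 0 ≤ s / p := div_nonneg hs0 hp0.le
    have hlow : 1 + s/p + (s/p)^2/2 + (s/p)^3/6 ≤ Real.exp (s/p) := aux_exp_cubic_le _ hsp0
    have hupp : Real.exp (-s) ≤ 1 - s + s^2/2 := aux_exp_neg_quad s hs0
    -- reduce to: e^{-1} * (p e^{s/p} - e^{-s}) ≥ s
    rw [e1, e2]
    have hinner : p * Real.exp (s/p) - Real.exp (-s) ≥ 3*s - s^3/(2*p) + s^3/(6*p^2) := by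
      have h1 : p * Real.exp (s/p) ≥ p + s + s^2/(2*p) + s^3/(6*p^2) := by
        have := mul_le_mul_of_nonneg_left hlow hp0.le
        calc p * Real.exp (s/p) ≥ p * (1 + s/p + (s/p)^2/2 + (s/p)^3/6) := this
          _ = p + s + s^2/(2*p) + s^3/(6*p^2) := by field_simp
      have hid : s^2/(2*p) - s^2/2 = -(s^3/(2*p)) := by field_simp; ring
      linarith [h1, hupp, hid]
    have hinner0 : 3*s - s^3/(2*p) + s^3/(6*p^2) ≥ 0 := by
      have : s^3 ≤ s := by
        nlinarith [mul_nonneg (mul_nonneg hs0 (sub_nonneg.2 hs1)) (by linarith : (0:ℝ) ≤ 1 + s)]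
      have h2p : s^3/(2*p) ≤ s := by
        rw [div_le_iff₀ (by positivity : (0:ℝ) < 2*p)]; nlinarith
      have : 0 ≤ s^3/(6*p^2) := by positivity
      linarith
    have hgoal : Real.exp (-1) * (p * Real.exp (s/p) - Real.exp (-s)) ≥ s := by
      have step1 : Real.exp (-1) * (p * Real.exp (s/p) - Real.exp (-s))
          ≥ 0.367879 * (3*s - s^3/(2*p) + s^3/(6*p^2)) := by
        calc Real.exp (-1) * (p * Real.exp (s/p) - Real.exp (-s))
            ≥ Real.exp (-1) * (3*s - s^3/(2*p) + s^3/(6*p^2)) :=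
              mul_le_mul_of_nonneg_left hinner (Real.exp_pos (-1)).le
          _ ≥ 0.367879 * (3*s - s^3/(2*p) + s^3/(6*p^2)) :=
              mul_le_mul_of_nonneg_right hc hinner0
      have step2 : 0.367879 * (3*s - s^3/(2*p) + s^3/(6*p^2)) ≥ s := by
        rw [ge_iff_le, ← sub_nonneg]
        have expand : 0.367879 * (3*s - s^3/(2*p) + s^3/(6*p^2)) - s
            = s * (0.367879 * (18*p^2 - 3*s^2*p + s^2) - 6*p^2) / (6*p^2) := by
          field_simp; ring
        rw [expand]
        apply div_nonneg _ (by positivity)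
        apply mul_nonneg hs0
        have hps : p = 1 + s := by rw [hs]; ring
        rw [hps]
        nlinarith [mul_nonneg (mul_nonneg hs0 hs0) hs0, mul_nonneg hs0 hs0,
          mul_nonneg (mul_nonneg hs0 hs0) (sub_nonneg.2 hs1)]
      linarith
    nlinarith [hgoal]
  · -- branch a : p ≥ 2
    set E1 : ℝ := Real.exp (-(1/p)) with hE1def
    set E2 : ℝ := Real.exp (-p) with hE2def
    have hx0 : 0 ≤ 1/p := by positivity
    have hx1 : 1/p ≤ 1 := by rw [div_le_one hp0]; linarith
    have g1 : 1 - 1/p + (1/p)^2/2 - (1/p)^3/6 - 5*(1/p)^4/96 ≤ E1 :=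
      aux_exp_neg_cubic_err (1/p) hx0 hx1
    have g1c : 96*p^4 - 96*p^3 + 48*p^2 - 16*p - 5 ≤ 96*p^4 * E1 := by
      have := mul_le_mul_of_nonneg_left g1 (by positivity : (0:ℝ) ≤ 96*p^4)
      calc (96:ℝ)*p^4 - 96*p^3 + 48*p^2 - 16*p - 5
          = 96*p^4 * (1 - 1/p + (1/p)^2/2 - (1/p)^3/6 - 5*(1/p)^4/96) := by field_simp; ring
        _ ≤ 96*p^4 * E1 := this
    have hS : (0:ℝ) < 6 + 6*p + 3*p^2 + p^3 := by positivity
    have g2S : E2 * (6 + 6*p + 3*p^2 + p^3) ≤ 6 := by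
      have hQ : 6 + 6*p + 3*p^2 + p^3 ≤ 6 * Real.exp p := by
        have := aux_exp_cubic_le p hp0.le
        linarith
      have hE2pos : 0 < E2 := Real.exp_pos _
      calc E2 * (6 + 6*p + 3*p^2 + p^3) ≤ E2 * (6 * Real.exp p) :=
            mul_le_mul_of_nonneg_left hQ hE2pos.le
        _ = 6 * (Real.exp (-p) * Real.exp p) := by rw [hE2def]; ring
        _ = 6 := by rw [← Real.exp_add]; simp
    have quintic : 576*p^3 ≤ (48*p^2 - 16*p - 5) * (6 + 6*p + 3*p^2 + p^3) := by
      have hv : (0:ℝ) ≤ p - 2 := by linarith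
      nlinarith [hv, pow_nonneg hv 2, pow_nonneg hv 3, pow_nonneg hv 4, pow_nonneg hv 5]
    have hE2b : 96*p^3 * E2 ≤ 48*p^2 - 16*p - 5 := by
      have h1 : 96*p^3 * E2 * (6 + 6*p + 3*p^2 + p^3) ≤ 576*p^3 := by
        have := mul_le_mul_of_nonneg_left g2S (by positivity : (0:ℝ) ≤ 96*p^3)
        calc 96*p^3 * E2 * (6 + 6*p + 3*p^2 + p^3) = 96*p^3 * (E2 * (6 + 6*p + 3*p^2 + p^3)) := by ring
          _ ≤ 96*p^3 * 6 := this
          _ = 576*p^3 := by ring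
      have h2 : 96*p^3 * E2 * (6 + 6*p + 3*p^2 + p^3) ≤ (48*p^2 - 16*p - 5) * (6 + 6*p + 3*p^2 + p^3) :=
        le_trans h1 quintic
      nlinarith [h2, hS]
    -- conclude
    have final : 96*p^3 * (p * (1 - E1) + E2) ≤ 96*p^3 * 1 := by
      have expand : 96*p^3 * (p * (1 - E1) + E2) = 96*p^4 - 96*p^4*E1 + 96*p^3*E2 := by ring
      have g1c' : -(96*p^4*E1) ≤ -(96*p^4 - 96*p^3 + 48*p^2 - 16*p - 5) := by linarith [g1c]
      rw [expand]
      linarith [hE2b]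
    have := le_of_mul_le_mul_left final (by positivity : (0:ℝ) < 96*p^3)
    linarith

/-- Two-variable version: `p (1 - e^{-w/p}) ≤ 1 - e^{-wp}` for `p ≥ 1`, `0 ≤ w ≤ 1`. -/
lemma aux_K (p w : ℝ) (hp : 1 ≤ p) (hw0 : 0 ≤ w) (hw1 : w ≤ 1) :
    p * (1 - Real.exp (-(w/p))) ≤ 1 - Real.exp (-(w*p)) := by
  have hp0 : (0:ℝ) < p := lt_of_lt_of_le one_pos hp
  set t : ℝ := Real.exp (-(w/p)) with htdef
  set t0 : ℝ := Real.exp (-(1/p)) with ht0def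
  have ht0t : t0 ≤ t := by
    apply Real.exp_le_exp.2
    have : w/p ≤ 1/p := by gcongr
    linarith
  have ht1 : t ≤ 1 := by
    have : t ≤ Real.exp 0 := by
      apply Real.exp_le_exp.2
      have : 0 ≤ w/p := div_nonneg hw0 hp0.le
      linarith
    simpa using this
  have ht00 : (0:ℝ) < t0 := Real.exp_pos _
  have ht01 : t0 < 1 := by
    have : t0 < Real.exp 0 := by
      apply Real.exp_lt_exp.2
      have : (0:ℝ) < 1/p := by positivity
      linarith
    simpa using this
  set μ : ℝ := (1 - t)/(1 - t0) with hμdef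
  have hden : (0:ℝ) < 1 - t0 := by linarith
  have hμ0 : 0 ≤ μ := div_nonneg (by linarith) hden.le
  have hμ1 : μ ≤ 1 := by
    rw [hμdef, div_le_one hden]; linarith
  have hcomb : μ * t0 + (1 - μ) * 1 = t := by
    have h' : μ * (1 - t0) = 1 - t := by rw [hμdef]; exact div_mul_cancel₀ _ hden.ne'
    linear_combination -h'
  set q : ℝ := p * p with hqdef
  have hq : (1:ℝ) ≤ q := by nlinarith
  have conv := (convexOn_rpow hq).2 (Set.mem_Ici.2 ht00.le) (Set.mem_Ici.2 zero_le_one)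
      hμ0 (by linarith : (0:ℝ) ≤ 1 - μ) (by ring)
  simp only [smul_eq_mul, Real.one_rpow] at conv
  rw [hcomb] at conv
  -- conv : t ^ q ≤ μ * t0 ^ q + (1 - μ) * 1
  have htq : t ^ q = Real.exp (-(w*p)) := by
    rw [htdef, Real.rpow_def_of_pos (Real.exp_pos _), Real.log_exp]
    congr 1; field_simp [hqdef]; ring
  have ht0q : t0 ^ q = Real.exp (-p) := by
    rw [ht0def, Real.rpow_def_of_pos (Real.exp_pos _), Real.log_exp]
    congr 1; field_simp [hqdef]; rw [hqdef]; ring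
  rw [htq, ht0q] at conv
  have hK1 := aux_K1 p hp
  have hμt : μ * (1 - t0) = 1 - t := by
    rw [hμdef]; exact div_mul_cancel₀ _ hden.ne'
  -- combine
  have : μ * (p * (1 - t0)) ≤ μ * (1 - Real.exp (-p)) := mul_le_mul_of_nonneg_left hK1 hμ0
  show p * (1 - t) ≤ 1 - Real.exp (-(w*p))
  calc p * (1 - t) = p * (μ * (1 - t0)) := by rw [hμt]
    _ = μ * (p * (1 - t0)) := by ring
    _ ≤ μ * (1 - Real.exp (-p)) := this
    _ = μ - μ * Real.exp (-p) := by ring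
    _ ≤ 1 - Real.exp (-(w*p)) := by linarith [conv]

set_option maxHeartbeats 1000000 in
/-- Analytic core of Lemma 6: with `θ_s = (1 + 1/C_M)^{C_m/λ} - 1` and
`θ_f = (1 + 1/C_M)^{C_m·λ} - 1`, whenever `N_s·λ + N_f ≥ C_m` the
lower bound of Lemma 5 already reaches `1`. -/
theorem stmt_6 (Cm CM lam : ℝ) (hCm : 0 < Cm) (hle : Cm ≤ CM)
    (hlam0 : 0 < lam) (hlam1 : lam ≤ 1)
    (θs θf : ℝ)
    (hθs : θs = (1 + 1 / CM) ^ (Cm / lam) - 1)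
    (hθf : θf = (1 + 1 / CM) ^ (Cm * lam) - 1) :
    ∀ Ns Nf : ℝ, 0 ≤ Ns → 0 ≤ Nf → Ns * lam + Nf ≥ Cm →
      ((1 + 1 / CM) ^ Ns - 1) / θs * (1 + 1 / CM) ^ Nf
        + ((1 + 1 / CM) ^ Nf - 1) / θf ≥ 1 := by
  intro Ns Nf hNs hNf hcon
  have hCM : (0:ℝ) < CM := lt_of_lt_of_le hCm hle
  set r : ℝ := 1 + 1/CM with hrdef
  have hrinv : (0:ℝ) < 1/CM := by positivity
  have hr1 : 1 < r := by rw [hrdef]; linarith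
  have hr0 : (0:ℝ) < r := by linarith
  set p : ℝ := 1/lam with hpdef
  have hp0 : (0:ℝ) < p := by positivity
  have hp1 : (1:ℝ) ≤ p := by rw [hpdef, le_div_iff₀ hlam0]; linarith
  have hθs0 : 0 < θs := by
    rw [hθs]
    have : (1:ℝ) < r ^ (Cm/lam) :=
      (Real.one_lt_rpow_iff_of_pos hr0).2 (Or.inl ⟨hr1, by positivity⟩)
    linarith
  have hθf0 : 0 < θf := by
    rw [hθf]
    have : (1:ℝ) < r ^ (Cm*lam) :=
      (Real.one_lt_rpow_iff_of_pos hr0).2 (Or.inl ⟨hr1, by positivity⟩)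
    linarith
  set w : ℝ := Cm * Real.log r with hwdef
  have hlogpos : 0 < Real.log r := Real.log_pos hr1
  have hw0 : 0 < w := by positivity
  have hw1 : w ≤ 1 := by
    have h1 : Real.log r ≤ 1/CM := by
      have := Real.log_le_sub_one_of_pos hr0
      rw [hrdef] at this; linarith
    calc w = Cm * Real.log r := hwdef
      _ ≤ Cm * (1/CM) := mul_le_mul_of_nonneg_left h1 hCm.le
      _ = Cm/CM := by ring
      _ ≤ 1 := by rw [div_le_one hCM]; linarith
  -- exponential forms
  have hW : r ^ (Cm/lam) = Real.exp (w*p) := by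
    rw [Real.rpow_def_of_pos hr0]; congr 1
    rw [hwdef, hpdef]; field_simp
  have hV : r ^ (Cm*lam) = Real.exp (w/p) := by
    rw [Real.rpow_def_of_pos hr0]; congr 1
    rw [hwdef, hpdef]; field_simp
  -- key inequality K'
  have hK' : p * θf * (θs + 1) ≤ θs * (θf + 1) := by
    set a : ℝ := Real.exp (w*p) with hadef
    set b : ℝ := Real.exp (w/p) with hbdef
    have ha0 : 0 < a := Real.exp_pos _
    have hb0 : 0 < b := Real.exp_pos _
    have hK := aux_K p w hp1 hw0.le hw1
    rw [Real.exp_neg, Real.exp_neg] at hK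
    -- hK : p * (1 - b⁻¹) ≤ 1 - a⁻¹
    have hmul := mul_le_mul_of_nonneg_left hK (by positivity : (0:ℝ) ≤ a*b)
    have e1 : a*b*(p*(1 - b⁻¹)) = p*(b-1)*a := by field_simp
    have e2 : a*b*(1 - a⁻¹) = (a-1)*b := by field_simp
    rw [e1, e2] at hmul
    have hθsa : θs = a - 1 := by rw [hθs, hW]
    have hθfb : θf = b - 1 := by rw [hθf, hV]
    rw [hθsa, hθfb]
    calc p * (b-1) * (a - 1 + 1) = p*(b-1)*a := by ring
      _ ≤ (a-1)*b := hmul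
      _ = (a-1)*(b-1+1) := by ring
  by_cases hA : Cm ≤ Ns * lam
  · -- case A: the slow-step term alone reaches 1
    have h1 : r ^ (Cm/lam) ≤ r ^ Ns :=
      (Real.rpow_le_rpow_left_iff hr1).2 ((div_le_iff₀ hlam0).2 (by linarith))
    have hterm1 : 1 ≤ (r ^ Ns - 1)/θs := by
      rw [le_div_iff₀ hθs0, hθs]; linarith
    have hNf1 : 1 ≤ r ^ Nf := Real.one_le_rpow hr1.le hNf
    have hterm2 : 0 ≤ (r ^ Nf - 1)/θf := div_nonneg (by linarith) hθf0.le
    have : 1 * 1 ≤ (r ^ Ns - 1)/θs * r ^ Nf :=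
      mul_le_mul hterm1 hNf1 zero_le_one (le_trans zero_le_one hterm1)
    linarith
  · push_neg at hA
    set u : ℝ := r ^ (Ns*lam) with hudef
    set U : ℝ := r ^ Cm with hUdef
    have hu1 : 1 ≤ u := Real.one_le_rpow hr1.le (mul_nonneg hNs hlam0.le)
    have hu0 : (0:ℝ) < u := by linarith
    have huU : u ≤ U := (Real.rpow_le_rpow_left_iff hr1).2 hA.le
    have hU0 : (0:ℝ) < U := by linarith
    have hup : r ^ Ns = u ^ p := by
      have hNsp : Ns * lam * p = Ns := by rw [hpdef]; field_simp
      rw [hudef, ← Real.rpow_mul hr0.le, hNsp]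
    have hUp : U ^ p = θs + 1 := by
      have hCmp : Cm * p = Cm / lam := by rw [hpdef]; ring
      rw [hUdef, ← Real.rpow_mul hr0.le, hCmp, hθs]; ring
    -- Bernoulli
    have hBern : 1 + p*(u/U - 1) ≤ (u/U) ^ p := by
      have hs : (-1:ℝ) ≤ u/U - 1 := by
        have : 0 ≤ u/U := by positivity
        linarith
      have h := one_add_mul_self_le_rpow_one_add hs hp1
      rwa [show 1 + (u/U - 1) = u/U by ring] at h
    have hdiv : (u/U) ^ p = u ^ p / U ^ p := Real.div_rpow hu0.le hU0.le _
    have hB' : U*(θs+1) + p*(θs+1)*(u-U) ≤ U * u ^ p := by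
      have h1 : (θs+1)*(1 + p*(u/U-1)) ≤ u ^ p := by
        have hm := mul_le_mul_of_nonneg_left hBern (by linarith : (0:ℝ) ≤ θs + 1)
        rw [hdiv, hUp] at hm
        calc (θs+1)*(1 + p*(u/U-1)) ≤ (θs+1) * (u ^ p / (θs+1)) := hm
          _ = u ^ p := by field_simp
      have hm2 := mul_le_mul_of_nonneg_left h1 hU0.le
      calc U*(θs+1) + p*(θs+1)*(u-U) = U*((θs+1)*(1 + p*(u/U-1))) := by
            field_simp
        _ ≤ U * u ^ p := hm2
    -- numerator nonneg
    have key : 0 ≤ θf*(U * u ^ p - U) + θs*(U-u) - θs*(θf*u) := by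
      have hint1 := mul_le_mul_of_nonneg_left hB' hθf0.le
      have hint2 : 0 ≤ (U-u)*(θs*(θf+1) - p*θf*(θs+1)) :=
        mul_nonneg (by linarith) (by linarith [hK'])
      nlinarith [hint1, hint2]
    -- monotonicity in Nf and conclusion
    have hNfge : U/u ≤ r ^ Nf := by
      have h1 : Cm - Ns*lam ≤ Nf := by linarith
      have h2 : r ^ (Cm - Ns*lam) ≤ r ^ Nf := (Real.rpow_le_rpow_left_iff hr1).2 h1
      rwa [Real.rpow_sub hr0, ← hUdef, ← hudef] at h2
    have hcoef : 0 ≤ (r ^ Ns - 1)/θs := by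
      have : 1 ≤ r ^ Ns := Real.one_le_rpow hr1.le hNs
      exact div_nonneg (by linarith) hθs0.le
    have T1 : (r ^ Ns - 1)/θs * (U/u) ≤ (r ^ Ns - 1)/θs * r ^ Nf :=
      mul_le_mul_of_nonneg_left hNfge hcoef
    have T2 : (U/u - 1)/θf ≤ (r ^ Nf - 1)/θf :=
      (div_le_div_iff_of_pos_right hθf0).2 (by linarith [hNfge])
    have hfin : 1 ≤ (u ^ p - 1)/θs * (U/u) + (U/u - 1)/θf := by
      rw [← sub_nonneg]
      have expand : (u ^ p - 1)/θs * (U/u) + (U/u - 1)/θf - 1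
          = (θf*(U * u ^ p - U) + θs*(U-u) - θs*(θf*u)) / (θs*(θf*u)) := by
        field_simp
      rw [expand]
      exact div_nonneg key (by positivity)
    rw [hup]
    linarith [T1, T2, hfin, hup ▸ T1]
end

section
/- For all real numbers x and λ with 0 < x ≤ 1 and 0 < λ ≤ 1, it holds that λ·(1 − e^{−x/λ}) ≥ 1 − e^{−x·λ}; equivalently, 1/(1 − e^{−x·λ}) ≥ (1/λ) · 1/(1 − e^{−x/λ}). -/
open Real Set


-- e^t ≤ 1 + t + t² for t ∈ [0,1]
lemma exp_le_quad {t : ℝ} (h0 : 0 ≤ t) (h1 : t ≤ 1) :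
    Real.exp t ≤ 1 + t + t ^ 2 := by
  have hb := Real.exp_bound (x := t) (by rw [abs_of_nonneg h0]; exact h1) (n := 2) (by norm_num)
  have : ∑ m ∈ Finset.range 2, t ^ m / (m.factorial : ℝ) = 1 + t := by
    simp [Finset.sum_range_succ]
  rw [this, abs_of_nonneg h0] at hb
  have h2 := (abs_le.1 hb).2
  norm_num at h2
  nlinarith [h2]

lemma g_pos {t : ℝ} (ht : 0 < t) : (0:ℝ) < Real.exp (-t) - 1 + t := by
  have := Real.add_one_lt_exp (x := -t) (neg_ne_zero.2 ht.ne')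
  linarith

-- the function ψ and its derivative
lemma psi_hasDerivAt {t : ℝ} (ht : 0 < t) :
    HasDerivAt (fun s => Real.log (Real.exp (-s) - 1 + s) - Real.log s + s⁻¹)
      ((-Real.exp (-t) + 1) / (Real.exp (-t) - 1 + t) - t⁻¹ + -(t ^ 2)⁻¹) t := by
  have hg : (0:ℝ) < Real.exp (-t) - 1 + t := g_pos ht
  have h1 : HasDerivAt (fun s : ℝ => Real.exp (-s) - 1 + s) (-Real.exp (-t) + 1) t := by
    have : HasDerivAt (fun s : ℝ => Real.exp (-s)) (Real.exp (-t) * (-1)) t :=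
      (hasDerivAt_id t).neg.exp
    have h := (this.sub_const 1).add (hasDerivAt_id t)
    exact h.congr_deriv (by ring)
  have h2 := h1.log hg.ne'
  have h3 : HasDerivAt (fun s : ℝ => Real.log s) t⁻¹ t := Real.hasDerivAt_log ht.ne'
  exact (h2.sub h3).add (hasDerivAt_inv ht.ne')

-- the x = 1 case
lemma caseA {lam : ℝ} (hl0 : 0 < lam) (hl1 : lam ≤ 1) :
    lam * (1 - Real.exp (-(1 / lam))) ≥ 1 - Real.exp (-lam) := by
  set ψ : ℝ → ℝ := fun s => Real.log (Real.exp (-s) - 1 + s) - Real.log s + s⁻¹ with hψ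
  have key : ψ lam ≥ ψ 1 := by
    rcases eq_or_lt_of_le hl1 with h | h
    · rw [h]
    · have hanti : AntitoneOn ψ (Icc lam 1) := by
        apply antitoneOn_of_deriv_nonpos (convex_Icc _ _)
        · intro s hs
          exact (psi_hasDerivAt (lt_of_lt_of_le hl0 hs.1)).continuousAt.continuousWithinAt
        · intro s hs
          rw [interior_Icc] at hs
          exact (psi_hasDerivAt (lt_trans hl0 hs.1)).differentiableAt.differentiableWithinAt
        · intro s hs
          rw [interior_Icc] at hs
          obtain ⟨hs0, hs1⟩ := hs
          have hs0' : 0 < s := lt_trans hl0 hs0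
          rw [(psi_hasDerivAt hs0').deriv]
          have hg : (0:ℝ) < Real.exp (-s) - 1 + s := g_pos hs0'
          have hquad : Real.exp s ≤ 1 + s + s ^ 2 := exp_le_quad hs0'.le hs1.le
          have hes : Real.exp (-s) * Real.exp s = 1 := by
            rw [← Real.exp_add]; simp
          have hE : (0:ℝ) < Real.exp (-s) := Real.exp_pos _
          have key2 : s ^ 2 * (1 - Real.exp (-s)) ≤ (s + 1) * (Real.exp (-s) - 1 + s) := by
            nlinarith [mul_le_mul_of_nonneg_right hquad hE.le, hes]
          have hs2 : (0:ℝ) < s ^ 2 := by positivity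
          have h5 : (-Real.exp (-s) + 1) / (Real.exp (-s) - 1 + s) ≤ s⁻¹ + (s ^ 2)⁻¹ := by
            rw [div_le_iff₀ hg, ← sub_nonneg]
            have heq : (s⁻¹ + (s ^ 2)⁻¹) * (Real.exp (-s) - 1 + s) - (-Real.exp (-s) + 1)
                = ((s + 1) * (Real.exp (-s) - 1 + s) - s ^ 2 * (1 - Real.exp (-s))) / s ^ 2 := by
              field_simp
              ring
            rw [heq]
            exact div_nonneg (by linarith) hs2.le
          linarith
      exact hanti (left_mem_Icc.2 hl1) (right_mem_Icc.2 hl1) hl1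
  have hψ1 : ψ 1 = 0 := by
    simp [hψ, Real.exp_neg, Real.log_inv, Real.log_exp]
  rw [hψ1] at key
  have hg : (0:ℝ) < Real.exp (-lam) - 1 + lam := g_pos hl0
  have hlog : Real.log (Real.exp (-lam) - 1 + lam) ≥ Real.log lam - lam⁻¹ := by
    simp only [hψ] at key; linarith
  have h2 : Real.exp (-lam) - 1 + lam ≥ lam * Real.exp (-lam⁻¹) := by
    calc Real.exp (-lam) - 1 + lam = Real.exp (Real.log (Real.exp (-lam) - 1 + lam)) := by
          rw [Real.exp_log hg]
      _ ≥ Real.exp (Real.log lam - lam⁻¹) := Real.exp_le_exp.2 hlog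
      _ = lam * Real.exp (-lam⁻¹) := by
          rw [Real.exp_sub, Real.exp_log hl0, Real.exp_neg]
          ring
  have hrw : -(1/lam) = -lam⁻¹ := by rw [one_div]
  rw [ge_iff_le, ← sub_nonneg, hrw]
  nlinarith [h2]

lemma F_hasDerivAt {lam : ℝ} (hl : lam ≠ 0) (t : ℝ) :
    HasDerivAt (fun t => lam * (1 - Real.exp (-(t / lam))) - (1 - Real.exp (-(t * lam))))
      (Real.exp (-(t / lam)) - lam * Real.exp (-(t * lam))) t := by
  have h1 : HasDerivAt (fun t : ℝ => -(t / lam)) (-(1 / lam)) t := by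
    simpa [Pi.neg_def] using ((hasDerivAt_id t).div_const lam).neg
  have h2 : HasDerivAt (fun t : ℝ => -(t * lam)) (-lam) t := by
    simpa [Pi.neg_def] using ((hasDerivAt_id t).mul_const lam).neg
  have h3 := ((h1.exp.const_sub 1).const_mul lam).sub (h2.exp.const_sub 1)
  exact h3.congr_deriv (by field_simp)

theorem mainineq (x lam : ℝ) (hx0 : 0 < x) (hx1 : x ≤ 1)
    (hl0 : 0 < lam) (hl1 : lam ≤ 1) :
    lam * (1 - Real.exp (-(x / lam))) ≥ 1 - Real.exp (-(x * lam)) := by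
  rcases eq_or_lt_of_le hl1 with rfl | hl
  · rw [div_one, mul_one, one_mul]
  · set F : ℝ → ℝ := fun t => lam * (1 - Real.exp (-(t / lam))) - (1 - Real.exp (-(t * lam)))
      with hF
    -- sign of the derivative: F' t ≥ 0 ↔ exp(t*lam - t/lam) ≥ lam
    have hderiv_sign : ∀ t : ℝ, lam ≤ Real.exp (t * lam - t / lam) →
        0 ≤ Real.exp (-(t / lam)) - lam * Real.exp (-(t * lam)) := by
      intro t h
      have hsplit : Real.exp (-(t / lam)) = Real.exp (t * lam - t / lam) * Real.exp (-(t * lam)) := by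
        rw [← Real.exp_add]; ring_nf
      rw [hsplit, sub_nonneg]
      exact mul_le_mul_of_nonneg_right h (Real.exp_pos _).le
    have hderiv_sign' : ∀ t : ℝ, Real.exp (t * lam - t / lam) ≤ lam →
        Real.exp (-(t / lam)) - lam * Real.exp (-(t * lam)) ≤ 0 := by
      intro t h
      have hsplit : Real.exp (-(t / lam)) = Real.exp (t * lam - t / lam) * Real.exp (-(t * lam)) := by
        rw [← Real.exp_add]; ring_nf
      rw [hsplit, sub_nonpos]
      exact mul_le_mul_of_nonneg_right h (Real.exp_pos _).le
    -- the exponent t*(lam - 1/lam) is antitone in t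
    have hcoef : lam - 1 / lam < 0 := by
      rw [sub_neg]
      calc lam < 1 := hl
        _ ≤ 1 / lam := by rw [le_div_iff₀ hl0]; nlinarith
    have hexp_anti : ∀ s t : ℝ, s ≤ t →
        Real.exp (t * lam - t / lam) ≤ Real.exp (s * lam - s / lam) := by
      intro s t hst
      apply Real.exp_le_exp.2
      have h1 : t * lam - t / lam = t * (lam - 1 / lam) := by ring
      have h2 : s * lam - s / lam = s * (lam - 1 / lam) := by ring
      rw [h1, h2]
      exact mul_le_mul_of_nonpos_right hst hcoef.le
    by_cases hc : lam ≤ Real.exp (x * lam - x / lam)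
    · -- F monotone on [0, x], F x ≥ F 0 = 0
      have hmono : MonotoneOn F (Icc 0 x) := by
        apply monotoneOn_of_deriv_nonneg (convex_Icc _ _)
        · intro t _; exact (F_hasDerivAt hl0.ne' t).continuousAt.continuousWithinAt
        · intro t _; exact (F_hasDerivAt hl0.ne' t).differentiableAt.differentiableWithinAt
        · intro t ht
          rw [interior_Icc] at ht
          rw [(F_hasDerivAt hl0.ne' t).deriv]
          exact hderiv_sign t (le_trans hc (hexp_anti t x ht.2.le))
      have h0 : F 0 = 0 := by simp [hF]
      have := hmono (left_mem_Icc.2 hx0.le) (right_mem_Icc.2 hx0.le) hx0.le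
      rw [h0] at this
      simpa [hF, ge_iff_le, sub_nonneg] using this
    · -- F antitone on [x, 1], F x ≥ F 1 ≥ 0
      push_neg at hc
      have hanti : AntitoneOn F (Icc x 1) := by
        apply antitoneOn_of_deriv_nonpos (convex_Icc _ _)
        · intro t _; exact (F_hasDerivAt hl0.ne' t).continuousAt.continuousWithinAt
        · intro t _; exact (F_hasDerivAt hl0.ne' t).differentiableAt.differentiableWithinAt
        · intro t ht
          rw [interior_Icc] at ht
          rw [(F_hasDerivAt hl0.ne' t).deriv]
          exact hderiv_sign' t (le_trans (hexp_anti x t ht.1.le) hc.le)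
      have h1 : 0 ≤ F 1 := by
        have := caseA hl0 hl1
        simp only [hF, one_mul]
        linarith [this]
      have := hanti (left_mem_Icc.2 hx1) (right_mem_Icc.2 hx1) hx1
      have hx' : 0 ≤ F x := le_trans h1 this
      simpa [hF, ge_iff_le, sub_nonneg] using hx'

/-- Analytic inequality of Bamas–Maggiori–Svensson used in Lemma 6 and
Theorem 3: for `0 < x ≤ 1` and `0 < λ ≤ 1`,
`λ·(1 - e^{-x/λ}) ≥ 1 - e^{-x·λ}`, equivalently
`1/(1 - e^{-x·λ}) ≥ (1/λ)·1/(1 - e^{-x/λ})`. -/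
theorem stmt_7 (x lam : ℝ) (hx0 : 0 < x) (hx1 : x ≤ 1)
    (hl0 : 0 < lam) (hl1 : lam ≤ 1) :
    lam * (1 - Real.exp (-(x / lam))) ≥ 1 - Real.exp (-(x * lam)) ∧
    1 / (1 - Real.exp (-(x * lam)))
      ≥ (1 / lam) * (1 / (1 - Real.exp (-(x / lam)))) := by
  have hmain := mainineq x lam hx0 hx1 hl0 hl1
  refine ⟨hmain, ?_⟩
  have hb : (0:ℝ) < 1 - Real.exp (-(x * lam)) := by
    have h : Real.exp (-(x * lam)) < Real.exp 0 := Real.exp_lt_exp.2 (by nlinarith)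
    rw [Real.exp_zero] at h; linarith
  have ha : (0:ℝ) < 1 - Real.exp (-(x / lam)) := by
    have h : Real.exp (-(x / lam)) < Real.exp 0 := by
      apply Real.exp_lt_exp.2
      have : 0 < x / lam := by positivity
      linarith
    rw [Real.exp_zero] at h; linarith
  have h1 : 1 / (lam * (1 - Real.exp (-(x / lam)))) ≤ 1 / (1 - Real.exp (-(x * lam))) :=
    one_div_le_one_div_of_le hb hmain
  calc (1 / lam) * (1 / (1 - Real.exp (-(x / lam))))
      = 1 / (lam * (1 - Real.exp (-(x / lam)))) := by rw [one_div_mul_one_div]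
    _ ≤ 1 / (1 - Real.exp (-(x * lam))) := h1
end

section
/- For all real numbers x and λ with 0 < x < 1 and 0 < λ ≤ 1, it holds that 1/(e^{x·λ} − 1) ≥ (((1 − λ)/λ)·e^{x/λ} + 1)/(e^{x/λ} − 1). -/
open Real

lemma exp_neg_ge_cubic {t : ℝ} (h0 : 0 ≤ t) (h1 : t ≤ 1) :
    1 - t + t^2/2 - t^3/6 - 5*t^4/96 ≤ Real.exp (-t) := by
  have habs : |(-t)| ≤ 1 := by rw [abs_neg, abs_of_nonneg h0]; exact h1
  have h := Real.exp_bound habs (n := 4) (by norm_num)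
  rw [abs_sub_le_iff] at h
  have h2 := h.2
  rw [abs_neg, abs_of_nonneg h0] at h2
  have hsum : (∑ m ∈ Finset.range 4, (-t) ^ m / m.factorial)
      = 1 - t + t^2/2 - t^3/6 := by
    simp [Finset.sum_range_succ, Nat.factorial]
    try ring
  rw [hsum] at h2
  norm_num [Nat.factorial] at h2
  nlinarith [h2]

lemma exp_neg_le_quartic {t : ℝ} (h0 : 0 ≤ t) (h1 : t ≤ 1) :
    Real.exp (-t) ≤ 1 - t + t^2/2 - t^3/6 + t^4/24 + t^5/100 := by
  have habs : |(-t)| ≤ 1 := by rw [abs_neg, abs_of_nonneg h0]; exact h1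
  have h := Real.exp_bound habs (n := 5) (by norm_num)
  rw [abs_sub_le_iff] at h
  have h2 := h.1
  rw [abs_neg, abs_of_nonneg h0] at h2
  have hsum : (∑ m ∈ Finset.range 5, (-t) ^ m / m.factorial)
      = 1 - t + t^2/2 - t^3/6 + t^4/24 := by
    simp [Finset.sum_range_succ, Nat.factorial]
    try ring
  rw [hsum] at h2
  norm_num [Nat.factorial] at h2
  nlinarith [h2]

lemma exp_ge_quadratic {t : ℝ} (h0 : 0 ≤ t) (h1 : t ≤ 1) :
    1 + t + t^2/2 - 2*t^3/9 ≤ Real.exp t := by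
  have habs : |t| ≤ 1 := by rw [abs_of_nonneg h0]; exact h1
  have h := Real.exp_bound habs (n := 3) (by norm_num)
  rw [abs_sub_le_iff] at h
  have h2 := h.2
  rw [abs_of_nonneg h0] at h2
  have hsum : (∑ m ∈ Finset.range 3, t ^ m / m.factorial)
      = 1 + t + t^2/2 := by
    simp [Finset.sum_range_succ, Nat.factorial]
    try ring
  rw [hsum] at h2
  norm_num [Nat.factorial] at h2
  nlinarith [h2]

lemma lemB_small {v : ℝ} (hv0 : 0 ≤ v) (hv1 : v ≤ 1) :
    (1+v) * (1 - Real.exp (-(1/(1+v)))) ≤ 1 - Real.exp (-(1+v)) := by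
  have h1v : (0:ℝ) < 1 + v := by linarith
  have hE1 : Real.exp 1 < 2.7182818286 := Real.exp_one_lt_d9
  have hE0 : (0:ℝ) < Real.exp 1 := Real.exp_pos 1
  have ht0 : 0 ≤ v/(1+v) := by positivity
  have ht1 : v/(1+v) ≤ 1 := by rw [div_le_one h1v]; linarith
  have h1 := exp_ge_quadratic ht0 ht1
  have h2 := exp_neg_le_quartic hv0 hv1
  have hexpu : Real.exp (-(1+v)) * Real.exp 1 = Real.exp (-v) := by
    rw [← Real.exp_add]; congr 1; ring
  have hexp1u : Real.exp (-(1/(1+v))) * Real.exp 1 = Real.exp (v/(1+v)) := by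
    rw [← Real.exp_add]; congr 1; field_simp; ring
  have hq : Real.exp 1 * v + Real.exp (-v) ≤ (1+v) * Real.exp (v/(1+v)) := by
    have hmul : (1+v) * (1 + (v/(1+v)) + (v/(1+v))^2/2 - 2*(v/(1+v))^3/9)
        ≤ (1+v) * Real.exp (v/(1+v)) := mul_le_mul_of_nonneg_left h1 h1v.le
    have hpoly : Real.exp 1 * v + (1 - v + v^2/2 - v^3/6 + v^4/24 + v^5/100)
        ≤ (1+v) * (1 + (v/(1+v)) + (v/(1+v))^2/2 - 2*(v/(1+v))^3/9) := by
      have hexpand : (1+v) * (1 + (v/(1+v)) + (v/(1+v))^2/2 - 2*(v/(1+v))^3/9)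
          = (18*(1+v)^3 + 18*v*(1+v)^2 + 9*v^2*(1+v) - 4*v^3) / (18*(1+v)^2) := by
        field_simp
        ring
      rw [hexpand, le_div_iff₀ (by positivity)]
      have hEv : 0 ≤ (2.7182818286 - Real.exp 1) * (v*(1+v)^2) :=
        mul_nonneg (by linarith) (by positivity)
      have k2 : 0 ≤ v*v*(1-v) := mul_nonneg (mul_nonneg hv0 hv0) (by linarith)
      have k3 : 0 ≤ v*v*v*(1-v) := mul_nonneg (mul_nonneg (mul_nonneg hv0 hv0) hv0) (by linarith)
      have k4 : 0 ≤ v*v*v*v*(1-v) := mul_nonneg (mul_nonneg (mul_nonneg (mul_nonneg hv0 hv0) hv0) hv0) (by linarith)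
      have k5 : 0 ≤ v*v*v*v*v*(1-v) := mul_nonneg (mul_nonneg (mul_nonneg (mul_nonneg (mul_nonneg hv0 hv0) hv0) hv0) hv0) (by linarith)
      have k6 : 0 ≤ v*v*v*v*v*v*(1-v) := mul_nonneg (mul_nonneg (mul_nonneg (mul_nonneg (mul_nonneg (mul_nonneg hv0 hv0) hv0) hv0) hv0) hv0) (by linarith)
      have k7 : 0 ≤ v*v*v*v*v*v*v := by positivity
      nlinarith [hEv, k2, k3, k4, k5, k6, k7, hv0]
    linarith
  rw [← mul_le_mul_iff_of_pos_right hE0]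
  have lhs_eq : (1+v) * (1 - Real.exp (-(1/(1+v)))) * Real.exp 1
      = (1+v)*Real.exp 1 - (1+v)*Real.exp (v/(1+v)) := by
    calc (1+v) * (1 - Real.exp (-(1/(1+v)))) * Real.exp 1
        = (1+v)*Real.exp 1 - (1+v)*(Real.exp (-(1/(1+v))) * Real.exp 1) := by ring
      _ = (1+v)*Real.exp 1 - (1+v)*Real.exp (v/(1+v)) := by rw [hexp1u]
  have rhs_eq : (1 - Real.exp (-(1+v))) * Real.exp 1
      = Real.exp 1 - Real.exp (-v) := by
    calc (1 - Real.exp (-(1+v))) * Real.exp 1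
        = Real.exp 1 - Real.exp (-(1+v)) * Real.exp 1 := by ring
      _ = Real.exp 1 - Real.exp (-v) := by rw [hexpu]
  rw [lhs_eq, rhs_eq]
  nlinarith [hq]

lemma lemB {u : ℝ} (hu : 1 ≤ u) :
    u * (1 - Real.exp (-(1/u))) ≤ 1 - Real.exp (-u) := by
  have hu0 : 0 < u := lt_of_lt_of_le one_pos hu
  rcases le_or_gt u 2 with hu2 | hu2
  · have h := lemB_small (v := u - 1) (by linarith) (by linarith)
    have hrw : 1 + (u - 1) = u := by ring
    rw [hrw] at h
    exact h
  · -- u ≥ 2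
    have ht0 : 0 ≤ 1/u := by positivity
    have ht1 : 1/u ≤ 1 := by rw [div_le_one hu0]; linarith
    have h1 := exp_neg_ge_cubic ht0 ht1
    have h2 : Real.exp (-u) ≤ ((1 + u/4)^4)⁻¹ := by
      rw [Real.exp_neg]
      apply inv_anti₀ (by positivity)
      calc (1 + u/4)^4 = ((u/4) + 1)^4 := by ring
        _ ≤ (Real.exp (u/4))^4 := by
            apply pow_le_pow_left₀ (by linarith) (Real.add_one_le_exp (u/4))
        _ = Real.exp u := by rw [← Real.exp_nat_mul]; congr 1; push_cast; ring
    have hinv : ((1 + u/4)^4)⁻¹ ≤ 1/(2*u) - 1/(6*u^2) - 5/(96*u^3) := by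
      have h3 : 1/(2*u) - 1/(6*u^2) - 5/(96*u^3) = (48*u^2 - 16*u - 5)/(96*u^3) := by
        field_simp; ring
      rw [h3]
      rw [inv_le_iff_one_le_mul₀ (by positivity), div_mul_eq_mul_div,
        le_div_iff₀ (by positivity), one_mul]
      have w1 : 0 ≤ u - 2 := by linarith
      have w2 : 0 ≤ (u-2)^2 := sq_nonneg _
      have w3 : 0 ≤ (u-2)^3 := pow_nonneg w1 3
      have w4 : 0 ≤ (u-2)^4 := pow_nonneg w1 4
      have w5 : 0 ≤ (u-2)^5 := pow_nonneg w1 5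
      have w6 : 0 ≤ (u-2)^6 := pow_nonneg w1 6
      nlinarith [w1, w2, w3, w4, w5, w6]
    have hb : u * (1 - Real.exp (-(1/u))) ≤ 1 - 1/(2*u) + 1/(6*u^2) + 5/(96*u^3) := by
      have hstep : u * (1 - Real.exp (-(1/u)))
          ≤ u * (1/u - (1/u)^2/2 + (1/u)^3/6 + 5*(1/u)^4/96) := by
        apply mul_le_mul_of_nonneg_left _ (le_of_lt hu0)
        linarith [h1]
      calc u * (1 - Real.exp (-(1/u)))
          ≤ u * (1/u - (1/u)^2/2 + (1/u)^3/6 + 5*(1/u)^4/96) := hstep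
        _ = 1 - 1/(2*u) + 1/(6*u^2) + 5/(96*u^3) := by field_simp
    have hfin : Real.exp (-u) ≤ 1/(2*u) - 1/(6*u^2) - 5/(96*u^3) := le_trans h2 hinv
    linarith

lemma keyT {u x : ℝ} (hu : 1 ≤ u) (hx0 : 0 ≤ x) (hx1 : x ≤ 1) :
    u * (1 - Real.exp (-(x/u))) ≤ 1 - Real.exp (-(x*u)) := by
  have hu0 : 0 < u := lt_of_lt_of_le one_pos hu
  rcases eq_or_lt_of_le hu with h1u | h1u
  · -- u = 1
    rw [← h1u]
    simp
  -- u > 1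
  set f : ℝ → ℝ := fun y => 1 - Real.exp (-(y*u)) - u * (1 - Real.exp (-(y/u))) with hf
  have hd : ∀ y, HasDerivAt f (u * Real.exp (-(y*u)) - Real.exp (-(y/u))) y := by
    intro y
    have h1 : HasDerivAt (fun y : ℝ => -(y*u)) (-u) y := by
      have h := ((hasDerivAt_id y).mul_const u).neg; simp only [id_eq, one_mul] at h; exact h
    have h2 : HasDerivAt (fun y : ℝ => Real.exp (-(y*u))) (Real.exp (-(y*u)) * (-u)) y :=
      (Real.hasDerivAt_exp _).comp y h1
    have h3 : HasDerivAt (fun y : ℝ => -(y/u)) (-(1/u)) y := by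
      have h := ((hasDerivAt_id y).div_const u).neg; simp only [id_eq] at h; exact h
    have h4 : HasDerivAt (fun y : ℝ => Real.exp (-(y/u))) (Real.exp (-(y/u)) * (-(1/u))) y :=
      (Real.hasDerivAt_exp _).comp y h3
    have h5 := ((h2.const_sub 1).sub ((h4.const_sub 1).const_mul u))
    have e : u * Real.exp (-(y*u)) - Real.exp (-(y/u)) = -(Real.exp (-(y*u)) * -u) - u * -(Real.exp (-(y/u)) * -(1/u)) := by
      linear_combination (Real.exp (-(y/u))) * mul_one_div_cancel hu0.ne'
    rw [e]
    exact h5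
  have hdiff : Differentiable ℝ f := fun y => (hd y).differentiableAt
  have hderiv : ∀ y, deriv f y = u * Real.exp (-(y*u)) - Real.exp (-(y/u)) :=
    fun y => (hd y).deriv
  have hf0 : f 0 = 0 := by simp [hf]
  have hu21 : 0 < u^2 - 1 := by nlinarith
  have hlogu : 0 < Real.log u := Real.log_pos h1u
  set c : ℝ := u * Real.log u / (u^2 - 1) with hc
  have hc0 : 0 ≤ c := by positivity
  -- derivative sign
  have hsign : ∀ y : ℝ, y * (u^2 - 1) ≤ u * Real.log u → 0 ≤ deriv f y := by
    intro y hy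
    rw [hderiv]
    rw [sub_nonneg]
    have : u * Real.exp (-(y*u)) = Real.exp (Real.log u + -(y*u)) := by
      rw [Real.exp_add, Real.exp_log hu0]
    rw [this, Real.exp_le_exp]
    have hkey2 : y*u - y/u ≤ Real.log u := by
      rw [← sub_nonneg]
      have hid : Real.log u - (y*u - y/u) = (u * Real.log u - y*(u^2-1))/u := by
        field_simp
      rw [hid]
      exact div_nonneg (by linarith) hu0.le
    linarith
  have hsign' : ∀ y : ℝ, u * Real.log u ≤ y * (u^2 - 1) → deriv f y ≤ 0 := by
    intro y hy
    rw [hderiv]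
    rw [sub_nonpos]
    have : u * Real.exp (-(y*u)) = Real.exp (Real.log u + -(y*u)) := by
      rw [Real.exp_add, Real.exp_log hu0]
    rw [this, Real.exp_le_exp]
    have hkey2 : Real.log u ≤ y*u - y/u := by
      rw [← sub_nonneg]
      have hid : (y*u - y/u) - Real.log u = (y*(u^2-1) - u * Real.log u)/u := by
        field_simp
      rw [hid]
      exact div_nonneg (by linarith) hu0.le
    linarith
  have hgoal : 0 ≤ f x := by
    rcases le_or_gt x c with hxc | hxc
    · -- monotone on [0, x]
      have hmono : MonotoneOn f (Set.Icc 0 x) := by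
        apply monotoneOn_of_deriv_nonneg (convex_Icc 0 x)
          hdiff.continuous.continuousOn hdiff.differentiableOn
        intro y hy
        rw [interior_Icc] at hy
        apply hsign
        calc y * (u^2 - 1) ≤ c * (u^2 - 1) := by
              apply mul_le_mul_of_nonneg_right _ (le_of_lt hu21)
              exact le_trans (le_of_lt hy.2) hxc
          _ = u * Real.log u := by
              rw [hc]; field_simp
      have := hmono (Set.left_mem_Icc.mpr hx0) (Set.right_mem_Icc.mpr hx0) hx0
      rw [hf0] at this
      exact this
    · -- antitone on [x, 1]
      have hanti : AntitoneOn f (Set.Icc x 1) := by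
        apply antitoneOn_of_deriv_nonpos (convex_Icc x 1)
          hdiff.continuous.continuousOn hdiff.differentiableOn
        intro y hy
        rw [interior_Icc] at hy
        apply hsign'
        calc u * Real.log u = c * (u^2 - 1) := by rw [hc]; field_simp
          _ ≤ y * (u^2 - 1) := by
              apply mul_le_mul_of_nonneg_right _ (le_of_lt hu21)
              exact le_of_lt (lt_trans hxc hy.1)
      have hx1' := hanti (Set.left_mem_Icc.mpr hx1) (Set.right_mem_Icc.mpr hx1) hx1
      have hf1 : 0 ≤ f 1 := by
        have := lemB (le_of_lt h1u)
        simp only [hf]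
        rw [one_mul]
        have h1u' : (1:ℝ)/u = 1/u := rfl
        linarith [this]
      linarith
  simp only [hf] at hgoal
  linarith

/-- Analytic inequality of Bamas–Maggiori–Svensson used in the proof of
Lemma 6: for `0 < x < 1` and `0 < λ ≤ 1`,
`1/(e^{x·λ} - 1) ≥ (((1-λ)/λ)·e^{x/λ} + 1)/(e^{x/λ} - 1)`. -/
theorem stmt_8 (x lam : ℝ) (hx0 : 0 < x) (hx1 : x < 1)
    (hl0 : 0 < lam) (hl1 : lam ≤ 1) :
    1 / (Real.exp (x * lam) - 1)
      ≥ (((1 - lam) / lam) * Real.exp (x / lam) + 1) / (Real.exp (x / lam) - 1) := by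
  have hu : 1 ≤ 1/lam := one_le_one_div hl0 hl1
  have hkey := keyT (u := 1/lam) (x := x) hu (le_of_lt hx0) (le_of_lt hx1)
  have e1 : x / (1/lam) = x * lam := by field_simp
  have e2 : x * (1/lam) = x / lam := by field_simp
  rw [e1, e2] at hkey
  -- hkey : (1/lam) * (1 - exp (-(x*lam))) ≤ 1 - exp (-(x/lam))
  have hA1 : 1 < Real.exp (x * lam) := by
    rw [Real.one_lt_exp_iff]; positivity
  have hB1 : 1 < Real.exp (x / lam) := by
    rw [Real.one_lt_exp_iff]; positivity
  have hA0 : 0 < Real.exp (x * lam) := Real.exp_pos _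
  have hB0 : 0 < Real.exp (x / lam) := Real.exp_pos _
  rw [Real.exp_neg, Real.exp_neg] at hkey
  rw [ge_iff_le, div_le_div_iff₀ (by linarith) (by linarith)]
  have hkey' : (1/lam) * (Real.exp (x/lam) * (Real.exp (x*lam) - 1))
      ≤ (Real.exp (x/lam) - 1) * Real.exp (x*lam) := by
    have hm : (0:ℝ) < Real.exp (x*lam) * Real.exp (x/lam) := by positivity
    have hmul := mul_le_mul_of_nonneg_right hkey hm.le
    have hAne : Real.exp (x*lam) ≠ 0 := ne_of_gt hA0
    have hBne : Real.exp (x/lam) ≠ 0 := ne_of_gt hB0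
    have id1 : (1/lam) * (1 - (Real.exp (x*lam))⁻¹) * (Real.exp (x*lam) * Real.exp (x/lam))
        = (1/lam) * (Real.exp (x/lam) * (Real.exp (x*lam) - 1)) := by
      field_simp
    have id2 : (1 - (Real.exp (x/lam))⁻¹) * (Real.exp (x*lam) * Real.exp (x/lam))
        = (Real.exp (x/lam) - 1) * Real.exp (x*lam) := by
      field_simp
    rw [id1, id2] at hmul
    exact hmul
  have hN : 0 ≤ lam * ((Real.exp (x/lam) - 1) * Real.exp (x*lam))
      - Real.exp (x/lam) * (Real.exp (x*lam) - 1) := by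
    have hmul := mul_le_mul_of_nonneg_left hkey' hl0.le
    have hlne : lam ≠ 0 := ne_of_gt hl0
    have id3 : lam * ((1/lam) * (Real.exp (x/lam) * (Real.exp (x*lam) - 1)))
        = Real.exp (x/lam) * (Real.exp (x*lam) - 1) := by
      field_simp
    rw [id3] at hmul
    linarith
  rw [← sub_nonneg]
  have hD : 1 * (Real.exp (x/lam) - 1)
      - (((1 - lam)/lam) * Real.exp (x/lam) + 1) * (Real.exp (x*lam) - 1)
      = (lam * ((Real.exp (x/lam) - 1) * Real.exp (x*lam))
        - Real.exp (x/lam) * (Real.exp (x*lam) - 1)) / lam := by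
    field_simp
    ring
  rw [hD]
  exact div_nonneg hN hl0.le
end

section
/- Let R ≥ 1 and 0 < λ ≤ 1 be real numbers. Let p : ℝ → ℝ be a nonnegative function integrable on [0,1] with ∫_0^1 p(t) dt = 1 and ∫_0^1 (R + t)·p(t) dt ≤ (λ·e^{λ/R})/(e^{λ/R} − 1), and let c be a real number such that for every T with 0 < T ≤ 1, ∫_0^T (R + t)·p(t) dt + T·∫_T^1 p(t) dt ≤ c·T. Then c ≥ e^{λ/R}/(e^{λ/R} − 1). -/
open MeasureTheory

open intervalIntegral Set Filter

lemma slope_aux (q : ℝ → ℝ) (hq : Integrable q) (hq2 : Integrable (fun t => t * q t)) (x : ℝ) :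
    HasDerivWithinAt (fun T => T * (∫ t in (0:ℝ)..T, q t) - ∫ t in (0:ℝ)..T, t * q t)
      (∫ t in (0:ℝ)..x, q t) (Set.Ici x) x := by
  set P : ℝ → ℝ := fun y => ∫ t in (0:ℝ)..y, q t with hPdef
  set Q : ℝ → ℝ := fun y => ∫ t in (0:ℝ)..y, t * q t with hQdef
  set g : ℝ → ℝ := fun T => T * P T - Q T with hgdef
  have hqi : ∀ a b : ℝ, IntervalIntegrable q volume a b := fun a b => hq.intervalIntegrable
  have hqi2 : ∀ a b : ℝ, IntervalIntegrable (fun t => t * q t) volume a b :=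
    fun a b => hq2.intervalIntegrable
  have key : ∀ y : ℝ, g y - g x - (y - x) * P x = ∫ t in x..y, (y - t) * q t := by
    intro y
    have h1 : (∫ t in x..y, (y - t) * q t)
        = y * (∫ t in x..y, q t) - ∫ t in x..y, t * q t := by
      rw [← intervalIntegral.integral_const_mul, ← intervalIntegral.integral_sub
        ((hqi x y).const_mul y) (hqi2 x y)]
      congr 1; ext t; ring
    have h2 : (∫ t in x..y, q t) = P y - P x := by
      rw [eq_sub_iff_add_eq, add_comm]
      exact intervalIntegral.integral_add_adjacent_intervals (hqi 0 x) (hqi x y)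
    have h3 : (∫ t in x..y, t * q t) = Q y - Q x := by
      rw [eq_sub_iff_add_eq, add_comm]
      exact intervalIntegral.integral_add_adjacent_intervals (hqi2 0 x) (hqi2 x y)
    rw [h1, h2, h3, hgdef]; ring
  rw [hasDerivWithinAt_iff_tendsto_slope, Set.Ici_sdiff_left]
  set N : ℝ → ℝ := fun y => ∫ t in (0:ℝ)..y, |q t| with hNdef
  have hNcont : Continuous N := hq.abs.continuous_primitive 0
  have hbound : ∀ y ∈ Set.Ioi x, |slope g x y - P x| ≤ N y - N x := by
    intro y hy
    have hxy : x < y := hy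
    have hys : slope g x y - P x = (∫ t in x..y, (y - t) * q t) / (y - x) := by
      have hne : y - x ≠ 0 := sub_ne_zero.mpr hxy.ne'
      rw [slope_def_field, ← key y, eq_div_iff hne]
      field_simp
    rw [hys, abs_div, abs_of_pos (by linarith : (0:ℝ) < y - x),
      div_le_iff₀ (by linarith : (0:ℝ) < y - x)]
    have habs : |∫ t in x..y, (y - t) * q t| ≤ ∫ t in x..y, |(y - t) * q t| :=
      intervalIntegral.abs_integral_le_integral_abs hxy.le
    have hii : IntervalIntegrable (fun t => (y - t) * q t) volume x y :=
      (hqi x y).continuousOn_mul (by fun_prop)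
    have hmono : (∫ t in x..y, |(y - t) * q t|) ≤ ∫ t in x..y, (y - x) * |q t| := by
      apply intervalIntegral.integral_mono_on hxy.le hii.abs (((hqi x y).abs).const_mul _)
      intro t ht
      rw [abs_mul]
      have h1 : |y - t| ≤ y - x := by
        rw [abs_of_nonneg (by linarith [ht.2] : (0:ℝ) ≤ y - t)]
        linarith [ht.1]
      exact mul_le_mul_of_nonneg_right h1 (abs_nonneg _)
    have hconst : (∫ t in x..y, (y - x) * |q t|) = (N y - N x) * (y - x) := by
      rw [intervalIntegral.integral_const_mul]
      have h2 : (∫ t in x..y, |q t|) = N y - N x := by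
        rw [eq_sub_iff_add_eq, add_comm]
        exact intervalIntegral.integral_add_adjacent_intervals
          (hq.abs.intervalIntegrable) (hq.abs.intervalIntegrable)
      rw [h2]; ring
    calc |∫ t in x..y, (y - t) * q t| ≤ ∫ t in x..y, |(y - t) * q t| := habs
      _ ≤ ∫ t in x..y, (y - x) * |q t| := hmono
      _ = (N y - N x) * (y - x) := hconst
  have hN0 : Tendsto (fun y => N y - N x) (nhdsWithin x (Set.Ioi x)) (nhds 0) := by
    have h1 : Tendsto (fun y => N y - N x) (nhds x) (nhds (N x - N x)) :=
      (hNcont.tendsto x).sub tendsto_const_nhds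
    rw [sub_self] at h1
    exact h1.mono_left nhdsWithin_le_nhds
  have habs0 : Tendsto (fun y => |slope g x y - P x|) (nhdsWithin x (Set.Ioi x)) (nhds 0) := by
    apply squeeze_zero' (Filter.Eventually.of_forall fun y => abs_nonneg _)
      (eventually_nhdsWithin_of_forall hbound) hN0
  have : Tendsto (fun y => slope g x y - P x) (nhdsWithin x (Set.Ioi x)) (nhds 0) :=
    (tendsto_zero_iff_abs_tendsto_zero _).mpr habs0
  have h := this.add (tendsto_const_nhds (x := P x))
  simp only [sub_add_cancel, zero_add] at h
  exact h

lemma primitive_id (q : ℝ → ℝ) (hq : Integrable q) (hq2 : Integrable (fun t => t * q t))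
    (b : ℝ) (hb : 0 ≤ b) :
    ∀ T ∈ Set.Icc (0:ℝ) b, (∫ s in (0:ℝ)..T, ∫ t in (0:ℝ)..s, q t)
      = T * (∫ t in (0:ℝ)..T, q t) - ∫ t in (0:ℝ)..T, t * q t := by
  set P : ℝ → ℝ := fun y => ∫ t in (0:ℝ)..y, q t with hPdef
  have hPc : Continuous P := hq.continuous_primitive 0
  apply eq_of_has_deriv_right_eq (f' := P)
  · intro y _
    exact (integral_hasDerivAt_right (hPc.intervalIntegrable _ _)
      (hPc.stronglyMeasurableAtFilter _ _) hPc.continuousAt).hasDerivWithinAt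
  · intro y _
    exact slope_aux q hq hq2 y
  · exact (intervalIntegral.continuous_primitive (fun a b => hPc.intervalIntegrable a b) 0).continuousOn
  · exact ((continuous_id.mul hPc).sub (hq2.continuous_primitive 0)).continuousOn
  · simp

/-- Continuous-time LP underlying Lemma 7 (optimal consistency–robustness
trade-off): any density `p` on `[0,1]` that is
`(λe^{λ/R})/(e^{λ/R}-1)`-consistent and `c`-robust satisfies
`c ≥ e^{λ/R}/(e^{λ/R} - 1)`. -/
theorem stmt_11 (R : ℝ) (hR : 1 ≤ R)
    (lam : ℝ) (hlam0 : 0 < lam) (hlam1 : lam ≤ 1)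
    (p : ℝ → ℝ) (hp : ∀ t, 0 ≤ p t)
    (hint : IntegrableOn p (Set.Icc 0 1))
    (hnorm : (∫ t in (0:ℝ)..1, p t) = 1)
    (hcons : (∫ t in (0:ℝ)..1, (R + t) * p t)
      ≤ lam * Real.exp (lam / R) / (Real.exp (lam / R) - 1))
    (c : ℝ)
    (hc : ∀ T : ℝ, 0 < T → T ≤ 1 →
      (∫ t in (0:ℝ)..T, (R + t) * p t) + T * (∫ t in T..(1:ℝ), p t) ≤ c * T) :
    c ≥ Real.exp (lam / R) / (Real.exp (lam / R) - 1) := by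
  have hR0 : (0:ℝ) < R := lt_of_lt_of_le one_pos hR
  set E : ℝ := Real.exp (lam / R) with hEdef
  have hE1 : 1 < E := by
    have := Real.add_one_lt_exp (ne_of_gt (div_pos hlam0 hR0))
    rw [hEdef]
    have hd : 0 < lam / R := div_pos hlam0 hR0
    linarith
  -- the truncated density
  set q : ℝ → ℝ := (Set.Icc (0:ℝ) 1).indicator p with hqdef
  have hq : Integrable q := hint.integrable_indicator measurableSet_Icc
  have hq0 : ∀ t, 0 ≤ q t := by
    intro t
    by_cases h : t ∈ Set.Icc (0:ℝ) 1 <;> simp [hqdef, Set.indicator, h, hp t]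
  have hq2 : Integrable (fun t => t * q t) := by
    have he : (fun t => t * q t) = (Set.Icc (0:ℝ) 1).indicator (fun t => t * p t) := by
      funext t
      by_cases h : t ∈ Set.Icc (0:ℝ) 1 <;> simp [hqdef, Set.indicator, h]
    rw [he]
    exact (IntegrableOn.continuousOn_mul continuous_id.continuousOn hint
      isCompact_Icc).integrable_indicator measurableSet_Icc
  have hqp : ∀ a b : ℝ, 0 ≤ a → b ≤ 1 → a ≤ b →
      ∀ f : ℝ → ℝ, (∫ t in a..b, f t * p t) = ∫ t in a..b, f t * q t := by
    intro a b ha hb hab f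
    apply intervalIntegral.integral_congr
    intro t ht
    rw [Set.uIcc_of_le hab] at ht
    have hm : t ∈ Set.Icc (0:ℝ) 1 := ⟨le_trans ha ht.1, le_trans ht.2 hb⟩
    simp only [hqdef, Set.indicator_of_mem hm]
  set P : ℝ → ℝ := fun y => ∫ t in (0:ℝ)..y, q t with hPdef
  set Q : ℝ → ℝ := fun y => ∫ t in (0:ℝ)..y, t * q t with hQdef
  set G : ℝ → ℝ := fun y => ∫ s in (0:ℝ)..y, P s with hGdef
  have hPc : Continuous P := hq.continuous_primitive 0
  have hGc : Continuous G := intervalIntegral.continuous_primitive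
    (fun a b => hPc.intervalIntegrable a b) 0
  have hid : ∀ T ∈ Set.Icc (0:ℝ) 1, G T = T * P T - Q T :=
    primitive_id q hq hq2 1 zero_le_one
  have hPmono : Monotone P := by
    intro a b hab
    have h1 : P a + (∫ t in a..b, q t) = P b :=
      intervalIntegral.integral_add_adjacent_intervals
        (hq.intervalIntegrable) (hq.intervalIntegrable)
    have h2 : (0:ℝ) ≤ ∫ t in a..b, q t :=
      intervalIntegral.integral_nonneg hab (fun t _ => hq0 t)
    linarith
  have hP1 : P 1 = 1 := by
    have hr : P 1 = ∫ t in (0:ℝ)..1, q t := rfl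
    have := hqp 0 1 le_rfl le_rfl zero_le_one (fun _ => (1:ℝ))
    simp only [one_mul] at this
    rw [hr, ← this, hnorm]
  -- the integral identity for the cost
  have hA : ∀ T : ℝ, 0 < T → T ≤ 1 →
      (∫ t in (0:ℝ)..T, (R + t) * p t) = R * P T + Q T := by
    intro T h0 h1
    rw [hqp 0 T le_rfl h1 h0.le (fun t => R + t)]
    have he : (∫ t in (0:ℝ)..T, (R + t) * q t)
        = (∫ t in (0:ℝ)..T, (R * q t + t * q t)) := by
      congr 1; ext t; ring
    rw [he, intervalIntegral.integral_add ((hq.intervalIntegrable).const_mul R)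
      (hq2.intervalIntegrable), intervalIntegral.integral_const_mul]
  -- robustness in terms of P and G
  have hrob : ∀ T : ℝ, 0 < T → T ≤ 1 → R * P T + T - G T ≤ c * T := by
    intro T h0 h1
    have h4 := hc T h0 h1
    rw [hA T h0 h1] at h4
    have h5 : (∫ t in T..(1:ℝ), p t) = 1 - P T := by
      have := hqp T 1 h0.le le_rfl h1 (fun _ => (1:ℝ))
      simp only [one_mul] at this
      rw [this]
      have h6 : P T + (∫ t in T..(1:ℝ), q t) = P 1 :=
        intervalIntegral.integral_add_adjacent_intervals
          (hq.intervalIntegrable) (hq.intervalIntegrable)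
      rw [hP1] at h6; linarith
    rw [h5] at h4
    have h7 := hid T ⟨h0.le, h1⟩
    nlinarith [h4, h7]
  -- derivative of G
  have hGd : ∀ x : ℝ, HasDerivAt G (P x) x := by
    intro x
    exact integral_hasDerivAt_right (hPc.intervalIntegrable _ _)
      (hPc.stronglyMeasurableAtFilter _ _) hPc.continuousAt
  -- the Gronwall function
  set ψ : ℝ → ℝ := fun T => Real.exp (-(T/R)) * ((c-1)*(R*Real.exp (T/R) - T - R) - G T)
    with hψdef
  have hψd : ∀ x : ℝ, HasDerivAt ψ
      (Real.exp (-(x/R)) * ((c-1)*(x/R) + G x / R - P x)) x := by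
    intro x
    have h3 : HasDerivAt (fun T : ℝ => T/R) (1/R) x := (hasDerivAt_id x).div_const R
    have h1 : HasDerivAt (fun T : ℝ => -(T/R)) (-(1/R)) x := h3.neg
    have h2 := h1.exp
    have h4 := h3.exp
    have h5 : HasDerivAt (fun T : ℝ => (c-1)*(R*Real.exp (T/R) - T - R) - G T)
        ((c-1)*(R*(Real.exp (x/R) * (1/R)) - 1) - P x) x := by
      have := (((h4.const_mul R).sub (hasDerivAt_id x)).sub_const R).const_mul (c-1)
      have h7 := this.sub (hGd x)
      simp at h7
      rw [one_div]; exact h7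
    have h6 : HasDerivAt ψ _ x := h2.mul h5
    convert h6 using 1
    field_simp
    ring
  have hψc : Continuous ψ := by
    have c1 : Continuous fun T : ℝ => R * Real.exp (T/R) :=
      continuous_const.mul (Real.continuous_exp.comp (continuous_id.div_const R))
    exact (Real.continuous_exp.comp (continuous_id.div_const R).neg).mul
      ((continuous_const.mul ((c1.sub continuous_id).sub continuous_const)).sub hGc)
  have hψmono : MonotoneOn ψ (Set.Icc 0 lam) := by
    apply monotoneOn_of_deriv_nonneg (convex_Icc _ _) hψc.continuousOn
    · intro x _
      exact (hψd x).differentiableAt.differentiableWithinAt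
    · intro x hx
      rw [interior_Icc] at hx
      rw [(hψd x).deriv]
      apply mul_nonneg (Real.exp_pos _).le
      have h8 := hrob x hx.1 (le_trans hx.2.le hlam1)
      have h9 : (c-1)*(x/R) + G x / R - P x = ((c-1)*x + G x - R * P x)/R := by
        field_simp
      rw [h9]
      apply div_nonneg _ hR0.le
      linarith
  have hψ0 : ψ 0 = 0 := by
    have hG0 : G 0 = 0 := intervalIntegral.integral_same
    simp [hψdef, hG0, Real.exp_zero]
  have hψlam : 0 ≤ ψ lam := by
    rw [← hψ0]
    exact hψmono ⟨le_rfl, hlam0.le⟩ ⟨hlam0.le, le_rfl⟩ hlam0.le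
  have hGlam : G lam ≤ (c-1)*(R*E - lam - R) := by
    rw [hψdef] at hψlam
    have hep := Real.exp_pos (-(lam/R))
    nlinarith [hψlam]
  -- bound G 1
  have hG1 : G 1 ≤ G lam + (1 - lam) := by
    have h1 : G lam + (∫ s in lam..(1:ℝ), P s) = G 1 :=
      intervalIntegral.integral_add_adjacent_intervals
        (hPc.intervalIntegrable _ _) (hPc.intervalIntegrable _ _)
    have h2 : (∫ s in lam..(1:ℝ), P s) ≤ ∫ s in lam..(1:ℝ), (1:ℝ) := by
      apply intervalIntegral.integral_mono_on hlam1 (hPc.intervalIntegrable _ _)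
        intervalIntegrable_const
      intro s hs
      calc P s ≤ P 1 := hPmono hs.2
        _ = 1 := hP1
    rw [intervalIntegral.integral_const, smul_eq_mul, mul_one] at h2
    linarith
  -- consistency bound
  have hcons' : R + 1 - G 1 ≤ lam * E / (E - 1) := by
    have h1 := hA 1 one_pos le_rfl
    have h2 := hid 1 ⟨zero_le_one, le_rfl⟩
    rw [h1] at hcons
    rw [hP1] at h2 hcons
    rw [hEdef]
    linarith [hcons, h2]
  -- final algebra
  have hKpos : 0 < R*(E-1) - lam := by
    have h1 : lam / R < E - 1 := by
      have := Real.add_one_lt_exp (x := lam/R) (ne_of_gt (div_pos hlam0 hR0))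
      rw [hEdef]; linarith
    have h2 : lam < R * (E - 1) := by
      rw [mul_comm]
      exact (div_lt_iff₀ hR0).mp h1
    linarith
  have hchain : (R*(E-1) - lam)/(E-1) ≤ (c-1)*(R*(E-1) - lam) := by
    have h1 : R + 1 - lam * E / (E - 1) ≤ G 1 := by linarith
    have hEne : E - 1 ≠ 0 := sub_ne_zero.mpr (ne_of_gt hE1)
    have h2 : R + lam - lam * E / (E - 1) = (R*(E-1) - lam)/(E-1) := by
      field_simp
      ring
    have h3 : (c-1)*(R*E - lam - R) = (c-1)*(R*(E-1) - lam) := by ring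
    nlinarith [hGlam, hG1, h1, h2, h3]
  rw [ge_iff_le, div_le_iff₀ (by linarith : (0:ℝ) < E - 1)]
  have hE0 : (0:ℝ) < E - 1 := by linarith
  rw [div_le_iff₀ hE0] at hchain
  nlinarith [hchain, hKpos, hE0, mul_pos hKpos hE0]
end

section
/- Let C_m and C_M be real numbers with 0 < C_m ≤ C_M, let λ be real with 0 < λ ≤ 1, and set θ_s = (1 + 1/C_M)^{C_m/λ} − 1 and θ_f = (1 + 1/C_M)^{C_m·λ} − 1 (real exponentiation). Then for all real numbers N_s ≥ 0 and N_f ≥ 0 with N_s·λ + N_f ≤ C_m + 1, it holds that N_s·(1 + 1/θ_s) + N_f·(1 + 1/θ_f) ≤ (C_m + 1)·(1 + 1/θ_f). -/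
open Real Set

set_option maxHeartbeats 1000000


/-- The single-variable core inequality. -/
lemma star_ineq {lam : ℝ} (h0 : 0 < lam) (h1 : lam ≤ 1) :
    1 - lam ≤ Real.exp (-lam) - lam * Real.exp (-(1/lam)) := by
  rcases le_or_gt lam (1/2) with hhalf | hhalf
  · -- small case
    have h4 : Real.exp (-lam)
        = Real.exp (-(lam/4)) * Real.exp (-(lam/4)) * Real.exp (-(lam/4)) * Real.exp (-(lam/4)) := by
      rw [← Real.exp_add, ← Real.exp_add, ← Real.exp_add]; ring_nf
    have hb : (1 - lam/4 : ℝ) ≤ Real.exp (-(lam/4)) := by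
      have := Real.add_one_le_exp (-(lam/4)); linarith
    have hb0 : (0:ℝ) ≤ 1 - lam/4 := by linarith
    have hlow : (1 - lam/4)^4 ≤ Real.exp (-lam) := by
      rw [h4]
      have h2 : (1 - lam/4)^2 ≤ Real.exp (-(lam/4)) * Real.exp (-(lam/4)) := by
        nlinarith [Real.exp_pos (-(lam/4))]
      nlinarith [Real.exp_pos (-(lam/4)), mul_pos (Real.exp_pos (-(lam/4))) (Real.exp_pos (-(lam/4))),
        sq_nonneg (1 - lam/4), pow_nonneg hb0 2]
    have he2 : (6:ℝ) ≤ Real.exp 2 := by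
      have h := Real.exp_one_gt_d9
      have h2 : Real.exp 2 = Real.exp 1 * Real.exp 1 := by
        rw [← Real.exp_add]; norm_num
      nlinarith [Real.exp_pos 1]
    have hstep : (1:ℝ) + (1/lam - 2) ≤ Real.exp (1/lam - 2) := by
      have := Real.add_one_le_exp (1/lam - 2); linarith
    have hsplit : Real.exp (1/lam) = Real.exp 2 * Real.exp (1/lam - 2) := by
      rw [← Real.exp_add]; ring_nf
    have hinv : 1/lam * lam = 1 := by field_simp
    have h6 : 6 * (1/lam - 1) ≤ Real.exp (1/lam) := by
      rw [hsplit]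
      have h1l : (1:ℝ)/lam - 1 ≤ Real.exp (1/lam - 2) := by linarith
      nlinarith [Real.exp_pos (1/lam - 2)]
    have hbig : 3/lam ≤ Real.exp (1/lam) := by
      have h36 : 3/lam ≤ 6 * (1/lam - 1) := by
        rw [div_le_iff₀ h0]; nlinarith
      linarith
    have hexpinv : Real.exp (-(1/lam)) ≤ lam/3 := by
      have h3pos : (0:ℝ) < 3/lam := by positivity
      calc Real.exp (-(1/lam)) = (Real.exp (1/lam))⁻¹ := by rw [Real.exp_neg]
        _ ≤ (3/lam)⁻¹ := inv_anti₀ h3pos hbig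
        _ = lam/3 := by rw [inv_div]
    have hfin : lam * Real.exp (-(1/lam)) ≤ lam^2/3 := by
      have := mul_le_mul_of_nonneg_left hexpinv h0.le
      nlinarith
    nlinarith [hlow, hfin]
  · -- big case: d = 1 - lam ∈ [0, 1/2)
    have hd0 : 0 ≤ 1 - lam := by linarith
    set d : ℝ := 1 - lam with hd
    have hd2 : d < 1/2 := by rw [hd]; linarith
    set q : ℝ := Real.exp d with hq
    have hqpos : (0:ℝ) < q := Real.exp_pos d
    have hq4 : (1 + d/4)^4 ≤ q := by
      have h4 : q = Real.exp (d/4) * Real.exp (d/4) * Real.exp (d/4) * Real.exp (d/4) := by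
        rw [hq, ← Real.exp_add, ← Real.exp_add, ← Real.exp_add]; ring_nf
      have hb : (1 + d/4 : ℝ) ≤ Real.exp (d/4) := by
        have := Real.add_one_le_exp (d/4); linarith
      have hb0 : (0:ℝ) ≤ 1 + d/4 := by linarith
      rw [h4]
      have h2 : (1 + d/4)^2 ≤ Real.exp (d/4) * Real.exp (d/4) := by
        nlinarith [Real.exp_pos (d/4)]
      nlinarith [Real.exp_pos (d/4), mul_pos (Real.exp_pos (d/4)) (Real.exp_pos (d/4)),
        sq_nonneg (1 + d/4), pow_nonneg hb0 2]
    have hE : Real.exp 1 < 2.7182818286 := Real.exp_one_lt_d9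
    have hE0 : (0:ℝ) < Real.exp 1 := Real.exp_pos 1
    have hexpand : ((1:ℝ) + d/4)^4 = 1 + d + 3/8*d^2 + 1/16*d^3 + 1/256*d^4 := by ring
    have hPE : 0 ≤ (1 + d/4)^4 - 2.7182818286 * d := by
      rw [hexpand]
      nlinarith [pow_nonneg hd0 2, pow_nonneg hd0 3, pow_nonneg hd0 4]
    have hqe : (1 + d/4)^4 - 2.7182818286 * d ≤ q - d * Real.exp 1 := by
      nlinarith [mul_le_mul_of_nonneg_left hE.le hd0]
    -- bound on exp(-(1/lam))
    have hiden : 1/lam = (2 - lam) + d^2/lam := by rw [hd]; field_simp; ring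
    have hexp2 : 1 + d^2/lam ≤ Real.exp (d^2/lam) := by
      have := Real.add_one_le_exp (d^2/lam); linarith
    have hsplit : Real.exp (1/lam) = Real.exp (2 - lam) * Real.exp (d^2/lam) := by
      rw [← Real.exp_add, ← hiden]
    have hden : 0 < lam^2 - lam + 1 := by nlinarith
    have hlamd : lam + d^2 = lam^2 - lam + 1 := by rw [hd]; ring
    have hbig : Real.exp (2 - lam) * ((lam^2 - lam + 1)/lam) ≤ Real.exp (1/lam) := by
      rw [hsplit]
      have h2 : (lam^2 - lam + 1)/lam ≤ Real.exp (d^2/lam) := by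
        rw [div_le_iff₀ h0]
        have hdl : d^2/lam * lam = d^2 := by field_simp
        nlinarith [Real.exp_pos (d^2/lam)]
      nlinarith [Real.exp_pos (2 - lam), Real.exp_pos (d^2/lam), h2,
        mul_le_mul_of_nonneg_left h2 (Real.exp_pos (2 - lam)).le]
    have hexpinv : Real.exp (-(1/lam)) ≤ Real.exp (lam - 2) * (lam/(lam^2 - lam + 1)) := by
      have hppos : (0:ℝ) < Real.exp (2 - lam) * ((lam^2 - lam + 1)/lam) := by positivity
      calc Real.exp (-(1/lam)) = (Real.exp (1/lam))⁻¹ := by rw [Real.exp_neg]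
        _ ≤ (Real.exp (2 - lam) * ((lam^2 - lam + 1)/lam))⁻¹ := inv_anti₀ hppos hbig
        _ = Real.exp (lam - 2) * (lam/(lam^2 - lam + 1)) := by
            rw [mul_inv, ← Real.exp_neg, inv_div, show -(2 - lam) = lam - 2 by ring]
    -- relate exp(-lam), exp(lam-2) to q
    have hml : Real.exp (-lam) = q / Real.exp 1 := by
      rw [hq, ← Real.exp_sub]; congr 1; rw [hd]; ring
    have hl2 : Real.exp (lam - 2) = 1 / (Real.exp 1 * q) := by
      rw [hq, ← Real.exp_add, one_div, ← Real.exp_neg]; congr 1; rw [hd]; ring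
    -- main polynomial inequality
    have hpoly : (1 - d)^2 ≤ ((1 + d/4)^4) * ((1 + d/4)^4 - 2.7182818286 * d) * (d^2 - d + 1) := by
      have hhalf2 : (0:ℝ) ≤ 1/2 - d := by linarith
      nlinarith [pow_nonneg hd0 2, pow_nonneg hd0 3, pow_nonneg hd0 4,
        pow_nonneg hd0 5, pow_nonneg hd0 6, pow_nonneg hd0 7, pow_nonneg hd0 8,
        mul_nonneg (pow_nonneg hd0 2) hhalf2, mul_nonneg (pow_nonneg hd0 3) hhalf2,
        mul_nonneg (pow_nonneg hd0 4) hhalf2, mul_nonneg (pow_nonneg hd0 5) hhalf2,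
        mul_nonneg hd0 hhalf2]
    have hP1 : (1:ℝ) ≤ (1 + d/4)^4 := by nlinarith [pow_nonneg hd0 2, pow_nonneg hd0 3, pow_nonneg hd0 4]
    have hdd : (0:ℝ) < d^2 - d + 1 := by nlinarith
    have hchain : (1 - d)^2 ≤ q * (q - d * Real.exp 1) * (d^2 - d + 1) := by
      have hA : (0:ℝ) ≤ (1 + d/4)^4 := by positivity
      have h1 : ((1 + d/4)^4) * ((1 + d/4)^4 - 2.7182818286 * d)
          ≤ q * (q - d * Real.exp 1) := by
        calc ((1 + d/4)^4) * ((1 + d/4)^4 - 2.7182818286 * d)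
            ≤ ((1 + d/4)^4) * (q - d * Real.exp 1) := by nlinarith
          _ ≤ q * (q - d * Real.exp 1) := by nlinarith
      calc (1 - d)^2 ≤ ((1 + d/4)^4) * ((1 + d/4)^4 - 2.7182818286 * d) * (d^2 - d + 1) := hpoly
        _ ≤ q * (q - d * Real.exp 1) * (d^2 - d + 1) := by nlinarith
    -- now conclude
    have hgoal : lam * Real.exp (-(1/lam)) ≤ Real.exp (-lam) + lam - 1 := by
      have hb1 : lam * Real.exp (-(1/lam)) ≤ lam * (Real.exp (lam - 2) * (lam/(lam^2 - lam + 1))) :=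
        mul_le_mul_of_nonneg_left hexpinv h0.le
      have heq : lam * (Real.exp (lam - 2) * (lam/(lam^2 - lam + 1)))
          = lam^2 / (Real.exp 1 * q * (lam^2 - lam + 1)) := by
        rw [hl2]; field_simp
      have hd2d : lam^2 - lam + 1 = d^2 - d + 1 := by rw [hd]; ring
      have hfin : lam^2 / (Real.exp 1 * q * (lam^2 - lam + 1)) ≤ Real.exp (-lam) + lam - 1 := by
        rw [div_le_iff₀ (by positivity)]
        rw [hml, hd2d]
        have hlam1d : lam = 1 - d := by rw [hd]; ring
        have hexpand2 : (q / Real.exp 1 + lam - 1) * (Real.exp 1 * q * (d^2 - d + 1))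
            = q * (q - d * Real.exp 1) * (d^2 - d + 1) := by
          rw [hlam1d]; field_simp; ring
        rw [hexpand2, hlam1d]
        exact hchain
      calc lam * Real.exp (-(1/lam)) ≤ lam^2 / (Real.exp 1 * q * (lam^2 - lam + 1)) := heq ▸ hb1
        _ ≤ Real.exp (-lam) + lam - 1 := hfin
    linarith

lemma K1 {s lam : ℝ} (hs0 : 0 < s) (hs1 : s ≤ 1) (h0 : 0 < lam) (h1 : lam ≤ 1) :
    1 - Real.exp (-(s*lam)) ≤ lam * (1 - Real.exp (-(s/lam))) := by
  set μ : ℝ := 1/lam^2 with hμ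
  have hμ1 : 1 ≤ μ := by
    rw [hμ, le_div_iff₀ (by positivity)]; nlinarith
  -- concavity of f x = x - lam * x^μ on Ici 0
  have hconv : ConvexOn ℝ (Ici (0:ℝ)) fun x : ℝ => lam * x ^ μ := by
    have := (convexOn_rpow hμ1).smul h0.le
    simpa [smul_eq_mul] using this
  have hconc : ConcaveOn ℝ (Ici (0:ℝ)) fun x : ℝ => x - lam * x ^ μ := by
    have hid : ConcaveOn ℝ (Ici (0:ℝ)) fun x : ℝ => x :=
      (LinearMap.id (R := ℝ) (M := ℝ)).concaveOn (convex_Ici 0)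
    exact hid.sub hconv
  -- endpoints
  have hx : Real.exp (-lam) ∈ Ici (0:ℝ) := (Real.exp_pos _).le
  have hy : (1:ℝ) ∈ Ici (0:ℝ) := mem_Ici.mpr zero_le_one
  have hv1 : Real.exp (-(s*lam)) ≤ 1 := by
    rw [Real.exp_le_one_iff]; nlinarith
  have hv0 : Real.exp (-lam) ≤ Real.exp (-(s*lam)) := by
    apply Real.exp_le_exp.mpr; nlinarith
  have hz : Real.exp (-(s*lam)) ∈ segment ℝ (Real.exp (-lam)) (1:ℝ) := by
    rw [segment_eq_Icc (by linarith [hv0, hv1] : Real.exp (-lam) ≤ 1)]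
    exact ⟨hv0, hv1⟩
  have hseg := hconc.ge_on_segment hx hy hz
  -- compute endpoint values
  have hrpow_exp : ∀ a : ℝ, (Real.exp a) ^ μ = Real.exp (a * μ) := by
    intro a
    rw [Real.rpow_def_of_pos (Real.exp_pos a), Real.log_exp]
  have hfx : Real.exp (-lam) - lam * (Real.exp (-lam)) ^ μ
      = Real.exp (-lam) - lam * Real.exp (-(1/lam)) := by
    rw [hrpow_exp]
    congr 3
    rw [hμ]; field_simp
  have hfy : (1:ℝ) - lam * (1:ℝ) ^ μ = 1 - lam := by
    rw [Real.one_rpow]; ring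
  have hfz : Real.exp (-(s*lam)) - lam * (Real.exp (-(s*lam))) ^ μ
      = Real.exp (-(s*lam)) - lam * Real.exp (-(s/lam)) := by
    rw [hrpow_exp]
    congr 3
    rw [hμ]; field_simp
  have hstar := star_ineq h0 h1
  have hmin : 1 - lam ≤ Real.exp (-(s*lam)) - lam * Real.exp (-(s/lam)) := by
    have := hseg
    rw [hfz] at this
    rw [hfx, hfy] at this  -- may not rewrite inside min properly
    calc (1:ℝ) - lam ≤ min (Real.exp (-lam) - lam * Real.exp (-(1/lam))) (1 - lam) :=
          le_min hstar le_rfl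
      _ ≤ _ := this
  nlinarith [hmin]

/-- Key intermediate bound in the proof of Theorem 3: with
`θ_s = (1 + 1/C_M)^{C_m/λ} - 1` and `θ_f = (1 + 1/C_M)^{C_m·λ} - 1`,
for all `N_s, N_f ≥ 0` with `N_s·λ + N_f ≤ C_m + 1`,
`N_s·(1 + 1/θ_s) + N_f·(1 + 1/θ_f) ≤ (C_m + 1)·(1 + 1/θ_f)`. -/
theorem stmt_19 (Cm CM lam : ℝ) (hCm : 0 < Cm) (hle : Cm ≤ CM)
    (hlam0 : 0 < lam) (hlam1 : lam ≤ 1)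
    (θs θf : ℝ)
    (hθs : θs = (1 + 1 / CM) ^ (Cm / lam) - 1)
    (hθf : θf = (1 + 1 / CM) ^ (Cm * lam) - 1) :
    ∀ Ns Nf : ℝ, 0 ≤ Ns → 0 ≤ Nf → Ns * lam + Nf ≤ Cm + 1 →
      Ns * (1 + 1 / θs) + Nf * (1 + 1 / θf) ≤ (Cm + 1) * (1 + 1 / θf) := by
  have hCM : 0 < CM := lt_of_lt_of_le hCm hle
  have ha1 : (1:ℝ) < 1 + 1/CM := by
    have : (0:ℝ) < 1/CM := by positivity
    linarith
  have ha0 : (0:ℝ) < 1 + 1/CM := by linarith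
  set L : ℝ := Real.log (1 + 1/CM) with hL
  have hL0 : 0 < L := Real.log_pos ha1
  set s : ℝ := Cm * L with hs
  have hs0 : 0 < s := mul_pos hCm hL0
  have hs1 : s ≤ 1 := by
    have hlog : L ≤ 1/CM := by
      have := Real.log_le_sub_one_of_pos ha0
      rw [hL]; linarith
    calc s = Cm * L := hs
      _ ≤ Cm * (1/CM) := by nlinarith
      _ ≤ 1 := by rw [mul_one_div, div_le_one hCM]; exact hle
  have hrw : ∀ x : ℝ, (1 + 1/CM) ^ x = Real.exp (L * x) := fun x => by
    rw [Real.rpow_def_of_pos ha0]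
  have hθsE : θs = Real.exp (s/lam) - 1 := by
    rw [hθs, hrw]; congr 2; rw [hs]; field_simp
  have hθfE : θf = Real.exp (s*lam) - 1 := by
    rw [hθf, hrw]; congr 2; rw [hs]; ring
  set E1 : ℝ := Real.exp (s/lam) with hE1
  set E2 : ℝ := Real.exp (s*lam) with hE2
  have hE1p : 0 < E1 := Real.exp_pos _
  have hE2p : 0 < E2 := Real.exp_pos _
  have hE1g : 1 < E1 := by
    rw [hE1]
    have := Real.exp_lt_exp.mpr (show (0:ℝ) < s/lam by positivity)
    rwa [Real.exp_zero] at this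
  have hE2g : 1 < E2 := by
    rw [hE2]
    have := Real.exp_lt_exp.mpr (show (0:ℝ) < s*lam by positivity)
    rwa [Real.exp_zero] at this
  have hθsp : 0 < θs := by rw [hθsE]; linarith
  have hθfp : 0 < θf := by rw [hθfE]; linarith
  -- key inequality from K1
  have hk := K1 hs0 hs1 hlam0 hlam1
  have hexp1 : Real.exp (-(s/lam)) = E1⁻¹ := by rw [hE1, Real.exp_neg]
  have hexp2 : Real.exp (-(s*lam)) = E2⁻¹ := by rw [hE2, Real.exp_neg]
  rw [hexp1, hexp2] at hk
  -- hk : 1 - E2⁻¹ ≤ lam * (1 - E1⁻¹)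
  have hk' : E1 * E2 - E1 ≤ lam * (E1 * E2 - E2) := by
    have h := mul_le_mul_of_nonneg_right hk (le_of_lt (mul_pos hE1p hE2p))
    have c1 : E2⁻¹ * (E1 * E2) = E1 := by field_simp
    have c2 : E1⁻¹ * (E1 * E2) = E2 := by field_simp
    nlinarith [h, c1, c2]
  have hd1 : (0:ℝ) < E1 - 1 := by linarith
  have hd2 : (0:ℝ) < E2 - 1 := by linarith
  have hkey : 1 + 1/θs ≤ lam * (1 + 1/θf) := by
    rw [hθsE, hθfE]
    have e1 : 1 + 1/(E1 - 1) = E1/(E1 - 1) := by field_simp; ring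
    have e2 : lam * (1 + 1/(E2 - 1)) = (lam * E2)/(E2 - 1) := by field_simp; ring
    rw [e1, e2, div_le_div_iff₀ hd1 hd2]
    nlinarith [hk']
  intro Ns Nf hNs hNf hsum
  have hB : (0:ℝ) < 1 + 1/θf := by positivity
  calc Ns * (1 + 1/θs) + Nf * (1 + 1/θf)
      ≤ Ns * (lam * (1 + 1/θf)) + Nf * (1 + 1/θf) := by
        nlinarith [mul_le_mul_of_nonneg_left hkey hNs]
    _ = (Ns * lam + Nf) * (1 + 1/θf) := by ring
    _ ≤ (Cm + 1) * (1 + 1/θf) := mul_le_mul_of_nonneg_right hsum hB.le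
end
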